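/- arXiv:2507.23557 — 3 statements merged into one kernel-verified Lean document; each statement's English description precedes it below -/
import Mathlib

section
/- For every integer s ≥ 0, one has A_{s+3} = (64/π) · ∑_{k=0}^{s} binom(s,k) / ((2k+1)(2k+3)(2k+5)), where A_s = ∑_{(m₁,…,m_s) ∈ ℕ^s} Cat_{m₁} ⋯ Cat_{m_s} · Cat_{m₁+⋯+m_s} · 16^{−(m₁+⋯+m_s)}. -/
open Real Finset intervalIntegral MeasureTheory

noncomputable def starSum (s : ℕ) : ℝ :=
  ∑' m : Fin s → ℕ,
    (∏ i, (catalan (m i) : ℝ)) * (catalan (∑ i, m i) : ℝ) * ((16 : ℝ) ^ (∑ i, m i))⁻¹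

lemma centralBinom_le_four_pow (n : ℕ) : Nat.centralBinom n ≤ 4 ^ n := by
  induction n with
  | zero => simp [Nat.centralBinom]
  | succ n ih =>
    have h := Nat.succ_mul_centralBinom_succ n
    have h2 : (n + 1) * Nat.centralBinom (n + 1) ≤ (n + 1) * (4 * Nat.centralBinom n) := by
      rw [h]; nlinarith [Nat.centralBinom_pos n]
    have := Nat.le_of_mul_le_mul_left h2 (Nat.succ_pos n)
    calc Nat.centralBinom (n+1) ≤ 4 * Nat.centralBinom n := this
      _ ≤ 4 * 4 ^ n := by omega
      _ = 4 ^ (n+1) := by ring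

lemma catalan_le_four_pow (n : ℕ) : catalan n ≤ 4 ^ n := by
  calc catalan n ≤ Nat.centralBinom n := by
        rw [catalan_eq_centralBinom_div]; exact Nat.div_le_self _ _
    _ ≤ 4 ^ n := centralBinom_le_four_pow n

lemma catalan_ratio (n : ℕ) : ((n : ℝ) + 2) * catalan (n + 1) = 2 * (2 * n + 1) * catalan n := by
  have h1 := succ_mul_catalan_eq_centralBinom n
  have h2 := succ_mul_catalan_eq_centralBinom (n + 1)
  have h3 := Nat.succ_mul_centralBinom_succ n
  have e : (n + 2) * ((n + 1) * catalan (n + 1)) = (n + 1) * (2 * (2 * n + 1) * catalan n) := by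
    calc (n + 2) * ((n + 1) * catalan (n + 1)) = (n + 1) * ((n + 1 + 1) * catalan (n + 1)) := by ring
      _ = (n + 1) * Nat.centralBinom (n + 1) := by rw [h2]
      _ = 2 * (2 * n + 1) * Nat.centralBinom n := h3
      _ = 2 * (2 * n + 1) * ((n + 1) * catalan n) := by rw [h1]
      _ = (n + 1) * (2 * (2 * n + 1) * catalan n) := by ring
  have e' : (((n:ℝ) + 2) * (((n:ℝ) + 1) * catalan (n + 1))) = ((n:ℝ) + 1) * (2 * (2 * n + 1) * catalan n) := by
    exact_mod_cast congrArg (Nat.cast : ℕ → ℝ) e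
  have hn : ((n:ℝ) + 1) ≠ 0 := by positivity
  nlinarith [e']

lemma cos_pow_reduce (n : ℕ) :
    (∫ θ in (0:ℝ)..(π/2), cos θ ^ (n + 2)) =
      ((n:ℝ) + 1) / ((n:ℝ) + 2) * ∫ θ in (0:ℝ)..(π/2), cos θ ^ n := by
  rw [integral_cos_pow]
  simp [Real.cos_pi_div_two, Real.sin_pi_div_two, zero_pow (Nat.succ_ne_zero n)]

lemma K_reduce (n : ℕ) :
    (∫ θ in (0:ℝ)..(π/2), cos θ ^ (2 * n) * sin θ ^ 2) =
      (∫ θ in (0:ℝ)..(π/2), cos θ ^ (2 * n)) / (2 * (n:ℝ) + 2) := by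
  have h1 : ∀ θ : ℝ, cos θ ^ (2 * n) * sin θ ^ 2 = cos θ ^ (2 * n) - cos θ ^ (2 * n + 2) := by
    intro θ
    have hs : sin θ ^ 2 = 1 - cos θ ^ 2 := by nlinarith [sin_sq_add_cos_sq θ]
    rw [hs, pow_add]; ring
  simp_rw [h1]
  rw [intervalIntegral.integral_sub (by apply Continuous.intervalIntegrable; fun_prop)
    (by apply Continuous.intervalIntegrable; fun_prop)]
  rw [cos_pow_reduce (2 * n)]
  have : ((2 * n : ℕ) : ℝ) = 2 * (n : ℝ) := by push_cast; ring
  rw [this]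
  have hne : 2 * (n:ℝ) + 2 ≠ 0 := by positivity
  field_simp
  ring

lemma wallis_catalan (n : ℕ) :
    (∫ θ in (0:ℝ)..(π/2), cos θ ^ (2 * n) * sin θ ^ 2) = π / 4 * (catalan n / 4 ^ n) := by
  induction n with
  | zero =>
    rw [K_reduce 0]
    norm_num
    ring
  | succ n ih =>
    have hK := K_reduce n
    have hK' := K_reduce (n + 1)
    have hred : (∫ θ in (0:ℝ)..(π/2), cos θ ^ (2 * (n+1))) =
        (2*(n:ℝ)+1)/(2*(n:ℝ)+2) * ∫ θ in (0:ℝ)..(π/2), cos θ ^ (2 * n) := by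
      have : 2 * (n + 1) = 2 * n + 2 := by ring
      rw [this, cos_pow_reduce (2 * n)]
      push_cast; ring_nf
    rw [hK', hred]
    have hcat := catalan_ratio n
    have hKn : (∫ θ in (0:ℝ)..(π/2), cos θ ^ (2 * n)) =
        π / 4 * (catalan n / 4 ^ n) * (2*(n:ℝ)+2) := by
      rw [← ih, hK]
      field_simp
    rw [hKn]
    have h4n : (4:ℝ)^n ≠ 0 := by positivity
    have hn2 : 2 * ((n:ℝ)+1) + 2 ≠ 0 := by positivity
    have hn1 : 2 * (n:ℝ) + 2 ≠ 0 := by positivity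
    push_cast
    field_simp
    linear_combination (-2 * (4:ℝ)^n) * hcat

lemma cauchy_sq_le {n : ℕ} (a : ℕ → ℝ) (ha : ∀ j, 0 ≤ a j) :
    (∑ m ∈ range n, ∑ p ∈ Finset.HasAntidiagonal.antidiagonal m, a p.1 * a p.2) ≤ (∑ j ∈ range n, a j) ^ 2 := by
  rw [sq, Finset.sum_mul_sum, Finset.sum_sigma']
  set S := (range n).sigma (fun m => Finset.HasAntidiagonal.antidiagonal m) with hS
  have key : ∀ x ∈ S, ∀ y ∈ S, x.2 = y.2 → x = y := by
    intro x hx y hy h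
    rw [hS, Finset.mem_sigma] at hx hy
    have hx2 := Finset.HasAntidiagonal.mem_antidiagonal.mp hx.2
    have hy2 := Finset.HasAntidiagonal.mem_antidiagonal.mp hy.2
    have h1 : x.1 = y.1 := by rw [← hx2, ← hy2, h]
    exact Sigma.ext h1 (heq_of_eq h)
  calc (∑ x ∈ S, a x.2.1 * a x.2.2)
      = ∑ p ∈ S.image (fun x => x.2), a p.1 * a p.2 :=
        (Finset.sum_image (f := fun p : ℕ × ℕ => a p.1 * a p.2) key).symm
    _ ≤ ∑ p ∈ range n ×ˢ range n, a p.1 * a p.2 := by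
        apply Finset.sum_le_sum_of_subset_of_nonneg
        · intro p hp
          simp only [Finset.mem_image] at hp
          obtain ⟨x, hx, hx3⟩ := hp
          rw [hS, Finset.mem_sigma] at hx
          have hx2 := Finset.HasAntidiagonal.mem_antidiagonal.mp hx.2
          have hx1 := Finset.mem_range.mp hx.1
          subst hx3
          simp only [Finset.mem_product, Finset.mem_range]
          omega
        · intro p _ _
          exact mul_nonneg (ha _) (ha _)
    _ = ∑ i ∈ range n, ∑ j ∈ range n, a i * a j := by rw [Finset.sum_product]

lemma g_fixed {t : ℝ} (h0 : 0 ≤ t) (h1 : 4 * t ≤ 1) :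
    t * (2 / (1 + Real.sqrt (1 - 4 * t))) ^ 2 + 1 = 2 / (1 + Real.sqrt (1 - 4 * t)) := by
  set d := Real.sqrt (1 - 4 * t) with hdd
  have hd0 : 0 ≤ d := Real.sqrt_nonneg _
  have hd2 : d ^ 2 = 1 - 4 * t := Real.sq_sqrt (by linarith)
  have hden : 1 + d ≠ 0 := by positivity
  field_simp
  linear_combination hd2

lemma partial_le_g {t : ℝ} (h0 : 0 ≤ t) (h1 : 4 * t ≤ 1) (n : ℕ) :
    (∑ j ∈ range n, (catalan j : ℝ) * t ^ j) ≤ 2 / (1 + Real.sqrt (1 - 4 * t)) := by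
  set g := 2 / (1 + Real.sqrt (1 - 4 * t)) with hg
  have hd0 : 0 ≤ Real.sqrt (1 - 4 * t) := Real.sqrt_nonneg _
  have hgnn : 0 ≤ g := by positivity
  induction n with
  | zero => simpa using hgnn
  | succ n ih =>
    have hPnn : 0 ≤ ∑ j ∈ range n, (catalan j : ℝ) * t ^ j :=
      Finset.sum_nonneg fun j _ => by positivity
    have key : (∑ j ∈ range (n+1), (catalan j : ℝ) * t ^ j) ≤
        1 + t * (∑ j ∈ range n, (catalan j : ℝ) * t ^ j) ^ 2 := by
      rw [Finset.sum_range_succ']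
      simp only [catalan_zero, Nat.cast_one, pow_zero, one_mul]
      have hterm : ∀ m, (catalan (m+1) : ℝ) * t ^ (m+1) =
          t * ∑ p ∈ Finset.HasAntidiagonal.antidiagonal m,
            ((catalan p.1 : ℝ) * t ^ p.1) * ((catalan p.2 : ℝ) * t ^ p.2) := by
        intro m
        rw [catalan_succ']
        push_cast
        rw [Finset.sum_mul, Finset.mul_sum]
        apply Finset.sum_congr rfl
        intro p hp
        have hpm := Finset.HasAntidiagonal.mem_antidiagonal.mp hp
        rw [← hpm, pow_succ, pow_add]
        ring
      calc (∑ m ∈ range n, (catalan (m+1) : ℝ) * t ^ (m+1)) + 1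
          = 1 + t * ∑ m ∈ range n, ∑ p ∈ Finset.HasAntidiagonal.antidiagonal m,
              ((catalan p.1 : ℝ) * t ^ p.1) * ((catalan p.2 : ℝ) * t ^ p.2) := by
            simp_rw [hterm]; rw [← Finset.mul_sum]; ring
        _ ≤ 1 + t * (∑ j ∈ range n, (catalan j : ℝ) * t ^ j) ^ 2 := by
            have hc := cauchy_sq_le (n := n) (fun j => (catalan j : ℝ) * t ^ j)
              (fun j => by positivity)
            nlinarith [hc]
    have hsq : (∑ j ∈ range n, (catalan j : ℝ) * t ^ j) ^ 2 ≤ g ^ 2 := by nlinarith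
    calc (∑ j ∈ range (n+1), (catalan j : ℝ) * t ^ j)
        ≤ 1 + t * (∑ j ∈ range n, (catalan j : ℝ) * t ^ j) ^ 2 := key
      _ ≤ 1 + t * g ^ 2 := by nlinarith [mul_le_mul_of_nonneg_left hsq h0]
      _ = g := by rw [add_comm]; exact g_fixed h0 h1

lemma gf_summable {t : ℝ} (h0 : 0 ≤ t) (h1 : 4 * t < 1) :
    Summable (fun j => (catalan j : ℝ) * t ^ j) := by
  apply Summable.of_nonneg_of_le (fun j => by positivity) (fun j => ?_)
    (summable_geometric_of_lt_one (by linarith) h1)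
  calc (catalan j : ℝ) * t ^ j ≤ (4 ^ j : ℝ) * t ^ j := by
        apply mul_le_mul_of_nonneg_right _ (by positivity)
        exact_mod_cast catalan_le_four_pow j
    _ = (4 * t) ^ j := by rw [mul_pow]

lemma gf_eq {t : ℝ} (h0 : 0 ≤ t) (h1 : 4 * t < 1) :
    ∑' j, (catalan j : ℝ) * t ^ j = 2 / (1 + Real.sqrt (1 - 4 * t)) := by
  rcases eq_or_lt_of_le h0 with h | ht
  · rw [← h]
    have h1' : ∑' j, (catalan j : ℝ) * (0:ℝ) ^ j = 1 := by
      rw [tsum_eq_single 0 (fun b hb => by simp [zero_pow hb])]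
      simp
    rw [h1']
    norm_num
  · set a := fun j => (catalan j : ℝ) * t ^ j with ha
    set d := Real.sqrt (1 - 4 * t) with hdd
    set g := 2 / (1 + d) with hg
    have hd0 : 0 < d := Real.sqrt_pos.mpr (by linarith)
    have hd2 : d ^ 2 = 1 - 4 * t := Real.sq_sqrt (by linarith)
    have hden : 1 + d ≠ 0 := by positivity
    have hsum := gf_summable h0 h1
    set S := ∑' j, a j with hS
    have hS_le : S ≤ g := Real.tsum_le_of_sum_range_le
      (fun j => by positivity) (partial_le_g h0 h1.le)
    have hSnn : 0 ≤ S := tsum_nonneg (fun j => by positivity)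
    have habs : Summable (fun j => ‖a j‖) := by
      refine (summable_congr fun j => ?_).mpr hsum
      rw [Real.norm_eq_abs, abs_of_nonneg (by positivity)]
    have hmul : S * S = ∑' n, ∑ p ∈ Finset.HasAntidiagonal.antidiagonal n, a p.1 * a p.2 :=
      tsum_mul_tsum_eq_tsum_sum_antidiagonal_of_summable_norm habs habs
    have h2 : ∀ n, (∑ p ∈ Finset.HasAntidiagonal.antidiagonal n, a p.1 * a p.2) = (catalan (n+1) : ℝ) * t ^ n := by
      intro n
      rw [catalan_succ']
      push_cast
      rw [Finset.sum_mul]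
      apply Finset.sum_congr rfl
      intro p hp
      have hpm := Finset.HasAntidiagonal.mem_antidiagonal.mp hp
      rw [ha]
      simp only
      rw [← hpm, pow_add]
      ring
    have hshift : Summable (fun n => a (n + 1)) := by
      exact (summable_nat_add_iff 1).mpr hsum
    have h3 : S = 1 + ∑' n, a (n + 1) := by
      rw [hS, Summable.tsum_eq_zero_add hsum]
      simp [ha]
    have h4 : t * (S * S) = ∑' n, a (n + 1) := by
      rw [hmul]
      rw [← tsum_mul_left]
      apply tsum_congr
      intro n
      rw [h2 n, ha]
      simp only
      rw [pow_succ]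
      ring
    have hquad : t * S ^ 2 + 1 = S := by
      rw [sq]
      rw [h4]
      linarith [h3]
    have hgq : t * g ^ 2 + 1 = g := by rw [hg, hdd]; exact g_fixed h0 h1.le
    have hfac : (S - g) * (t * (S + g) - 1) = 0 := by
      linear_combination hquad - hgq
    have h2tg : 2 * t * g - 1 = -d := by
      rw [hg]
      field_simp
      linear_combination hd2
    have hneg : t * (S + g) - 1 < 0 := by
      nlinarith [mul_le_mul_of_nonneg_left (by linarith : S + g ≤ 2 * g) h0, h2tg, hd0]
    have hz : S - g = 0 := by
      rcases mul_eq_zero.mp hfac with h | h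
      · exact h
      · linarith
    linarith [hz]

lemma tsum_pi_pow (r : ℕ) (f : ℕ → ENNReal) :
    ∑' m : Fin r → ℕ, ∏ i, f (m i) = (∑' j, f j) ^ r := by
  induction r with
  | zero =>
    rw [tsum_eq_single (fun i => i.elim0) (fun b hb => absurd (Subsingleton.elim b _) hb)]
    simp
  | succ r ih =>
    rw [← (Fin.consEquiv (fun _ : Fin (r+1) => ℕ)).tsum_eq, ENNReal.tsum_prod']
    have hpt : ∀ (a : ℕ) (b : Fin r → ℕ),
        (∏ i, f (((Fin.consEquiv (fun _ : Fin (r+1) => ℕ)) (a, b)) i)) = f a * ∏ i, f (b i) := by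
      intro a b
      rw [Fin.prod_univ_succ]
      rfl
    simp_rw [hpt]
    simp_rw [ENNReal.tsum_mul_left]
    rw [ENNReal.tsum_mul_right, ih, pow_succ]
    ring

lemma poly_int (s : ℕ) :
    (∫ x in (0:ℝ)..1, (1 - x ^ 2) ^ 2 * (1 + x ^ 2) ^ s) =
      ∑ k ∈ range (s + 1),
        (s.choose k : ℝ) * (8 / ((2 * (k:ℝ) + 1) * (2 * (k:ℝ) + 3) * (2 * (k:ℝ) + 5))) := by
  have hexp : ∀ x : ℝ, (1 - x ^ 2) ^ 2 * (1 + x ^ 2) ^ s =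
      ∑ k ∈ range (s + 1), (s.choose k : ℝ) *
        (x ^ (2 * k) - 2 * x ^ (2 * k + 2) + x ^ (2 * k + 4)) := by
    intro x
    rw [add_comm (1:ℝ) (x^2), add_pow]
    rw [Finset.mul_sum]
    apply Finset.sum_congr rfl
    intro k _
    simp only [one_pow, pow_add, pow_mul]
    try ring
  simp_rw [hexp]
  rw [intervalIntegral.integral_finset_sum
    (fun k _ => by apply Continuous.intervalIntegrable; fun_prop)]
  apply Finset.sum_congr rfl
  intro k _
  rw [intervalIntegral.integral_const_mul]
  congr 1
  rw [intervalIntegral.integral_add, intervalIntegral.integral_sub]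
  · rw [intervalIntegral.integral_const_mul]
    simp_rw [integral_pow]
    push_cast
    have h1 : (2 * (k:ℝ) + 1) ≠ 0 := by positivity
    have h3 : (2 * (k:ℝ) + 3) ≠ 0 := by positivity
    have h5 : (2 * (k:ℝ) + 5) ≠ 0 := by positivity
    norm_num
    field_simp
    ring
  all_goals apply Continuous.intervalIntegrable
  all_goals fun_prop

lemma trig_int (s : ℕ) :
    (∫ θ in (0:ℝ)..(π/2), sin θ ^ 2 * (2 / (1 + sin θ)) ^ (s + 3)) =
      2 * ∫ x in (0:ℝ)..1, (1 - x ^ 2) ^ 2 * (1 + x ^ 2) ^ s := by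
  set f : ℝ → ℝ := fun x => π/2 - 2 * arctan x with hf
  set f' : ℝ → ℝ := fun x => -(2 / (1 + x ^ 2)) with hf'
  set g : ℝ → ℝ := fun θ => sin θ ^ 2 * (2 / (1 + sin θ)) ^ (s + 3) with hgdef
  have hderiv : ∀ x ∈ Set.uIcc (0:ℝ) 1, HasDerivAt f (f' x) x := by
    intro x _
    have h1 : HasDerivAt (fun x : ℝ => 2 * arctan x) (2 * (1 / (1 + x ^ 2))) x :=
      (Real.hasDerivAt_arctan x).const_mul 2
    have h2 := h1.const_sub (π/2)
    exact h2.congr_deriv (by rw [hf']; ring)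
  have hcont : ContinuousOn f' (Set.uIcc (0:ℝ) 1) := by
    apply ContinuousOn.neg
    apply ContinuousOn.div continuousOn_const (by fun_prop)
    intro x _
    positivity
  have himg : f '' Set.uIcc (0:ℝ) 1 ⊆ Set.Icc 0 (π/2) := by
    intro y hy
    obtain ⟨x, hx, rfl⟩ := hy
    rw [Set.uIcc_of_le (by norm_num : (0:ℝ) ≤ 1)] at hx
    obtain ⟨hx0, hx1⟩ := hx
    have ha0 : 0 ≤ arctan x := by
      rw [← Real.arctan_zero]
      exact Real.arctan_strictMono.monotone hx0
    have ha1 : arctan x ≤ π/4 := by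
      rw [← Real.arctan_one]
      exact Real.arctan_strictMono.monotone hx1
    constructor
    · simp only [hf]; linarith
    · simp only [hf]; linarith [Real.pi_pos]
  have hgcont : ContinuousOn g (f '' Set.uIcc (0:ℝ) 1) := by
    apply ContinuousOn.mono _ himg
    apply ContinuousOn.mul
    · fun_prop
    · apply ContinuousOn.pow
      apply ContinuousOn.div continuousOn_const (by fun_prop)
      intro θ hθ
      have : 0 ≤ sin θ := Real.sin_nonneg_of_nonneg_of_le_pi hθ.1
        (le_trans hθ.2 (by linarith [Real.pi_pos]))
      linarith
  have key : ∀ x ∈ Set.uIcc (0:ℝ) 1,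
      f' x • (g ∘ f) x = -(2 * ((1 - x ^ 2) ^ 2 * (1 + x ^ 2) ^ s)) := by
    intro x _
    have hden : (0:ℝ) < 1 + x ^ 2 := by positivity
    have hsin : sin (f x) = (1 - x ^ 2) / (1 + x ^ 2) := by
      rw [hf]
      simp only
      rw [Real.sin_pi_div_two_sub, Real.cos_two_mul, Real.cos_arctan]
      rw [div_pow, one_pow, Real.sq_sqrt (by positivity : (0:ℝ) ≤ 1 + x ^ 2)]
      field_simp
      ring
    simp only [Function.comp, hgdef, smul_eq_mul, hf']
    rw [hsin]
    have hinner : 1 + (1 - x ^ 2) / (1 + x ^ 2) = 2 / (1 + x ^ 2) := by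
      field_simp
      norm_num
    rw [hinner]
    have houter : (2:ℝ) / (2 / (1 + x ^ 2)) = 1 + x ^ 2 := by
      field_simp
    rw [houter, div_pow]
    field_simp
    ring
  have hsub := intervalIntegral.integral_comp_smul_deriv' hderiv hcont hgcont
  have hL : (∫ x in (0:ℝ)..1, f' x • (g ∘ f) x) =
      -(2 * ∫ x in (0:ℝ)..1, (1 - x ^ 2) ^ 2 * (1 + x ^ 2) ^ s) := by
    rw [intervalIntegral.integral_congr key]
    rw [intervalIntegral.integral_neg, intervalIntegral.integral_const_mul]
  have hf0 : f 0 = π/2 := by simp [hf]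
  have hf1 : f 1 = 0 := by
    simp only [hf, Real.arctan_one]; ring
  rw [hf0, hf1] at hsub
  rw [hL] at hsub
  have : (∫ θ in (π/2:ℝ)..0, g θ) = -∫ θ in (0:ℝ)..(π/2), g θ :=
    intervalIntegral.integral_symm 0 (π/2)
  rw [this] at hsub
  have := neg_injective hsub
  rw [← this]

/-- For `s ≥ 0`, `A_{s+3} = (64/π) ∑_{k=0}^s binom(s,k)/((2k+1)(2k+3)(2k+5))`. -/
theorem stmt_15 (s : ℕ) :
    starSum (s + 3) =
      64 / π * ∑ k ∈ Finset.range (s + 1),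
        (s.choose k : ℝ) / ((2 * (k : ℝ) + 1) * (2 * (k : ℝ) + 3) * (2 * (k : ℝ) + 5)) := by
  have hpi : (0:ℝ) < π := Real.pi_pos
  set B : ℝ := ∑ k ∈ Finset.range (s + 1),
      (s.choose k : ℝ) / ((2 * (k : ℝ) + 1) * (2 * (k : ℝ) + 3) * (2 * (k : ℝ) + 5)) with hB
  have hBnn : 0 ≤ B := by
    apply Finset.sum_nonneg
    intro k _
    positivity
  -- the real-valued term function
  set u : (Fin (s + 3) → ℕ) → ℝ := fun m =>
    (∏ i, (catalan (m i) : ℝ)) * (catalan (∑ i, m i) : ℝ) * ((16 : ℝ) ^ (∑ i, m i))⁻¹ with hu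
  have hunn : ∀ m, 0 ≤ u m := by
    intro m
    apply mul_nonneg (mul_nonneg (Finset.prod_nonneg fun i _ => by positivity) (by positivity))
    positivity
  -- the trig integrand
  set g : ℝ → ℝ := fun θ => sin θ ^ 2 * (2 / (1 + sin θ)) ^ (s + 3) with hgdef
  have hgcont : ContinuousOn g (Set.Icc 0 (π/2)) := by
    apply ContinuousOn.mul
    · fun_prop
    · apply ContinuousOn.pow
      apply ContinuousOn.div continuousOn_const (by fun_prop)
      intro θ hθ
      have : 0 ≤ sin θ := Real.sin_nonneg_of_nonneg_of_le_pi hθ.1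
        (le_trans hθ.2 (by linarith))
      linarith
  -- value of the trig integral
  have hval : (∫ θ in (0:ℝ)..(π/2), g θ) = 16 * B := by
    rw [hgdef]
    rw [trig_int s, poly_int s]
    rw [hB, Finset.mul_sum]
    rw [Finset.mul_sum]
    apply Finset.sum_congr rfl
    intro k _
    ring
  -- step A : π/4 * u m as an integral
  have hA : ∀ m : Fin (s + 3) → ℕ, π/4 * u m =
      ∫ θ in (0:ℝ)..(π/2),
        sin θ ^ 2 * ∏ i, ((catalan (m i) : ℝ) * (cos θ ^ 2 / 4) ^ (m i)) := by
    intro m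
    set N := ∑ i, m i with hN
    have h16 : ((16:ℝ) ^ N)⁻¹ = ((4:ℝ) ^ N)⁻¹ * ((4:ℝ) ^ N)⁻¹ := by
      rw [show (16:ℝ) = 4 * 4 by norm_num, mul_pow, mul_inv]
    have hw := wallis_catalan N
    calc π/4 * u m
        = ((∏ i, (catalan (m i) : ℝ)) * ((4:ℝ) ^ N)⁻¹) *
            (π / 4 * ((catalan N : ℝ) / 4 ^ N)) := by
          rw [hu]
          simp only
          rw [h16]
          field_simp
          ring
      _ = ((∏ i, (catalan (m i) : ℝ)) * ((4:ℝ) ^ N)⁻¹) *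
            ∫ θ in (0:ℝ)..(π/2), cos θ ^ (2 * N) * sin θ ^ 2 := by rw [hw]
      _ = ∫ θ in (0:ℝ)..(π/2),
            ((∏ i, (catalan (m i) : ℝ)) * ((4:ℝ) ^ N)⁻¹) * (cos θ ^ (2 * N) * sin θ ^ 2) := by
          rw [intervalIntegral.integral_const_mul]
      _ = ∫ θ in (0:ℝ)..(π/2),
            sin θ ^ 2 * ∏ i, ((catalan (m i) : ℝ) * (cos θ ^ 2 / 4) ^ (m i)) := by
          apply intervalIntegral.integral_congr
          intro θ _
          beta_reduce
          rw [Finset.prod_mul_distrib, Finset.prod_pow_eq_pow_sum, ← hN, div_pow, ← pow_mul,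
            mul_comm 2 N]
          field_simp
  -- step B : as a lintegral
  have hB2 : ∀ m : Fin (s + 3) → ℕ,
      ENNReal.ofReal (π/4 * u m) =
        ∫⁻ θ in Set.Ioc 0 (π/2),
          ENNReal.ofReal (sin θ ^ 2 * ∏ i, ((catalan (m i) : ℝ) * (cos θ ^ 2 / 4) ^ (m i))) := by
    intro m
    rw [hA m, intervalIntegral.integral_of_le (by positivity)]
    apply MeasureTheory.ofReal_integral_eq_lintegral_ofReal
    · apply (Continuous.integrableOn_Icc (by fun_prop)).mono_set Set.Ioc_subset_Icc_self
    · apply Filter.Eventually.of_forall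
      intro θ
      apply mul_nonneg (by positivity)
      exact Finset.prod_nonneg fun i _ => by positivity
  -- pointwise tsum evaluation on Ioc
  have hD : ∀ θ ∈ Set.Ioc (0:ℝ) (π/2),
      (∑' m : Fin (s + 3) → ℕ,
        ENNReal.ofReal (sin θ ^ 2 * ∏ i, ((catalan (m i) : ℝ) * (cos θ ^ 2 / 4) ^ (m i))))
        = ENNReal.ofReal (g θ) := by
    intro θ hθ
    obtain ⟨hθ0, hθ1⟩ := hθ
    set t : ℝ := cos θ ^ 2 / 4 with ht
    have hcos0 : 0 ≤ cos θ := Real.cos_nonneg_of_mem_Icc ⟨by linarith, hθ1⟩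
    have hcos1 : cos θ < 1 := by
      have := Real.cos_lt_cos_of_nonneg_of_le_pi (le_refl (0:ℝ)) (by linarith) hθ0
      rwa [Real.cos_zero] at this
    have hsin0 : 0 ≤ sin θ := Real.sin_nonneg_of_nonneg_of_le_pi hθ0.le (by linarith)
    have h0t : 0 ≤ t := by positivity
    have h1t : 4 * t < 1 := by
      rw [ht]
      nlinarith
    have hsqrt : Real.sqrt (1 - 4 * t) = sin θ := by
      rw [ht]
      have : 1 - 4 * (cos θ ^ 2 / 4) = sin θ ^ 2 := by
        nlinarith [sin_sq_add_cos_sq θ]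
      rw [this, Real.sqrt_sq hsin0]
    have hterm : ∀ m : Fin (s + 3) → ℕ,
        ENNReal.ofReal (sin θ ^ 2 * ∏ i, ((catalan (m i) : ℝ) * t ^ (m i)))
          = ENNReal.ofReal (sin θ ^ 2) *
              ∏ i, ENNReal.ofReal ((catalan (m i) : ℝ) * t ^ (m i)) := by
      intro m
      rw [ENNReal.ofReal_mul (by positivity)]
      congr 1
      exact ENNReal.ofReal_prod_of_nonneg fun i _ => by positivity
    calc (∑' m : Fin (s + 3) → ℕ,
            ENNReal.ofReal (sin θ ^ 2 * ∏ i, ((catalan (m i) : ℝ) * t ^ (m i))))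
        = ∑' m : Fin (s + 3) → ℕ, ENNReal.ofReal (sin θ ^ 2) *
            ∏ i, ENNReal.ofReal ((catalan (m i) : ℝ) * t ^ (m i)) := by
          exact tsum_congr hterm
      _ = ENNReal.ofReal (sin θ ^ 2) *
            ∑' m : Fin (s + 3) → ℕ, ∏ i, ENNReal.ofReal ((catalan (m i) : ℝ) * t ^ (m i)) :=
          ENNReal.tsum_mul_left
      _ = ENNReal.ofReal (sin θ ^ 2) *
            (∑' j : ℕ, ENNReal.ofReal ((catalan j : ℝ) * t ^ j)) ^ (s + 3) := by
          rw [tsum_pi_pow (s + 3) (fun j => ENNReal.ofReal ((catalan j : ℝ) * t ^ j))]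
      _ = ENNReal.ofReal (g θ) := by
          rw [← ENNReal.ofReal_tsum_of_nonneg (fun j => by positivity) (gf_summable h0t h1t)]
          rw [gf_eq h0t h1t, hsqrt]
          rw [← ENNReal.ofReal_pow (by positivity)]
          rw [← ENNReal.ofReal_mul (by positivity)]
  -- main ENNReal computation
  set E : ENNReal := ∑' m : Fin (s + 3) → ℕ, ENNReal.ofReal (u m) with hE
  have claim : ENNReal.ofReal (π/4) * E = ENNReal.ofReal (16 * B) := by
    calc ENNReal.ofReal (π/4) * E
        = ∑' m : Fin (s + 3) → ℕ, ENNReal.ofReal (π/4) * ENNReal.ofReal (u m) := by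
          rw [hE, ENNReal.tsum_mul_left]
      _ = ∑' m : Fin (s + 3) → ℕ, ENNReal.ofReal (π/4 * u m) := by
          apply tsum_congr
          intro m
          exact (ENNReal.ofReal_mul (by positivity)).symm
      _ = ∑' m : Fin (s + 3) → ℕ, ∫⁻ θ in Set.Ioc 0 (π/2),
            ENNReal.ofReal (sin θ ^ 2 * ∏ i, ((catalan (m i) : ℝ) * (cos θ ^ 2 / 4) ^ (m i))) := by
          exact tsum_congr hB2
      _ = ∫⁻ θ in Set.Ioc 0 (π/2), ∑' m : Fin (s + 3) → ℕ,
            ENNReal.ofReal (sin θ ^ 2 * ∏ i, ((catalan (m i) : ℝ) * (cos θ ^ 2 / 4) ^ (m i))) := by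
          rw [MeasureTheory.lintegral_tsum]
          intro m
          apply Measurable.aemeasurable
          apply Measurable.ennreal_ofReal
          fun_prop
      _ = ∫⁻ θ in Set.Ioc 0 (π/2), ENNReal.ofReal (g θ) := by
          apply MeasureTheory.setLIntegral_congr_fun measurableSet_Ioc
          exact hD
      _ = ENNReal.ofReal (∫ θ in Set.Ioc (0:ℝ) (π/2), g θ) := by
          rw [MeasureTheory.ofReal_integral_eq_lintegral_ofReal]
          · exact (hgcont.integrableOn_Icc).mono_set Set.Ioc_subset_Icc_self
          · apply Filter.Eventually.of_forall
            intro θ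
            simp only [hgdef]
            have h1 : (0:ℝ) ≤ 1 + sin θ := by nlinarith [Real.neg_one_le_sin θ]
            positivity
      _ = ENNReal.ofReal (16 * B) := by
          rw [← intervalIntegral.integral_of_le (by positivity), hval]
  -- finish
  have hpi4 : ENNReal.ofReal (π/4) ≠ 0 := by
    simp only [ne_eq, ENNReal.ofReal_eq_zero, not_le]
    positivity
  have hEtop : E ≠ ⊤ := by
    intro h
    rw [h, ENNReal.mul_top hpi4] at claim
    exact (ENNReal.ofReal_ne_top) claim.symm
  have hEreal : π/4 * E.toReal = 16 * B := by
    have := congrArg ENNReal.toReal claim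
    rw [ENNReal.toReal_mul, ENNReal.toReal_ofReal (by positivity),
      ENNReal.toReal_ofReal (by positivity)] at this
    exact this
  have hstar : starSum (s + 3) = E.toReal := by
    rw [starSum, hE, ENNReal.tsum_toReal_eq (fun m => ENNReal.ofReal_ne_top)]
    apply tsum_congr
    intro m
    rw [ENNReal.toReal_ofReal (hunn m)]
  rw [hstar]
  have : E.toReal = 64 / π * B := by
    field_simp at hEreal ⊢
    linarith
  rw [this]
end

section
/- As s → ∞, one has A_s ∼ (8/π) · 2^s / s³; that is, the sequence s ↦ A_s · s³ / 2^s tends to 8/π, where A_s = ∑_{(m₁,…,m_s) ∈ ℕ^s} Cat_{m₁} ⋯ Cat_{m_s} · Cat_{m₁+⋯+m_s} · 16^{−(m₁+⋯+m_s)}. -/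
open Real Filter

section StarSumAux
open Finset intervalIntegral Set


lemma cat_cb (n : ℕ) : ((n:ℝ)+1) * catalan n = Nat.centralBinom n := by
  exact_mod_cast congrArg (Nat.cast : ℕ → ℝ) (succ_mul_catalan_eq_centralBinom n)

lemma cb_succ (n : ℕ) : ((n:ℝ)+1) * Nat.centralBinom (n+1) = 2*(2*n+1) * Nat.centralBinom n := by
  exact_mod_cast congrArg (Nat.cast : ℕ → ℝ) (Nat.succ_mul_centralBinom_succ n)

lemma cat_partial (N : ℕ) :
    ∑ n ∈ range N, (catalan n : ℝ) / 4 ^ n = 2 - 2 * Nat.centralBinom N / 4 ^ N := by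
  induction N with
  | zero => simp [Nat.centralBinom]
  | succ N ih =>
    have h1 := cat_cb N
    have h2 := cb_succ N
    have hN : ((N:ℝ)+1) ≠ 0 := by positivity
    have h3 : (catalan N:ℝ) = Nat.centralBinom N/((N:ℝ)+1) := by rw [eq_div_iff hN]; linarith
    have h4 : (Nat.centralBinom (N+1):ℝ) = 2*(2*N+1) * Nat.centralBinom N/((N:ℝ)+1) := by
      rw [eq_div_iff hN]; linarith
    rw [Finset.sum_range_succ, ih, pow_succ, h3, h4]
    field_simp
    ring

lemma cat_le_four_pow (n : ℕ) : (catalan n : ℝ) ≤ 4 ^ n := by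
  have h1 : catalan n ≤ Nat.centralBinom n := by
    rw [catalan_eq_centralBinom_div]; exact Nat.div_le_self _ _
  have h2 : Nat.centralBinom n ≤ 4 ^ n := by
    have hmem : n ∈ range (2*n+1) := Finset.mem_range.mpr (by omega)
    calc Nat.centralBinom n ≤ ∑ i ∈ range (2*n+1), (2*n).choose i :=
          Finset.single_le_sum (f := fun i => (2*n).choose i) (fun i _ => Nat.zero_le _) hmem
      _ = 2 ^ (2*n) := Nat.sum_range_choose (2*n)
      _ = 4 ^ n := by rw [pow_mul]; norm_num
  calc ((catalan n : ℝ)) ≤ (Nat.centralBinom n : ℝ) := by exact_mod_cast h1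
    _ ≤ ((4:ℕ) ^ n : ℝ) := by exact_mod_cast h2
    _ = 4 ^ n := by norm_num

lemma cat_summable {x : ℝ} (hx : 0 ≤ x) (hx4 : x < 1/4) :
    Summable (fun n => (catalan n : ℝ) * x ^ n) := by
  exact Summable.of_nonneg_of_le (fun n => by positivity)
    (fun n => by
      rw [show (4*x)^n = 4^n * x^n from mul_pow 4 x n] at *
      exact mul_le_mul_of_nonneg_right (cat_le_four_pow n) (by positivity))
    (summable_geometric_of_lt_one (by positivity) (by linarith))

lemma cat_tsum_le_two {x : ℝ} (hx : 0 ≤ x) (hx4 : x ≤ 1/4) (hs : Summable (fun n => (catalan n : ℝ) * x ^ n)) :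
    ∑' n, (catalan n : ℝ) * x ^ n ≤ 2 := by
  apply tsum_le_of_sum_range_le (fun n => by positivity)
  intro N
  calc ∑ n ∈ range N, (catalan n : ℝ) * x ^ n
      ≤ ∑ n ∈ range N, (catalan n : ℝ) / 4 ^ n := by
        apply Finset.sum_le_sum
        intro n _
        rw [div_eq_mul_inv, ← inv_pow]
        exact mul_le_mul_of_nonneg_left (pow_le_pow_left₀ hx (by linarith [hx4]) n)
          (by positivity)
    _ = 2 - 2 * Nat.centralBinom N / 4 ^ N := cat_partial N
    _ ≤ 2 := by
        have : (0:ℝ) ≤ 2 * Nat.centralBinom N / 4 ^ N := by positivity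
        linarith

lemma cat_gf {x : ℝ} (hx : 0 ≤ x) (hx4 : x < 1/4) :
    ∑' n, (catalan n : ℝ) * x ^ n = 2 / (1 + Real.sqrt (1 - 4*x)) := by
  set f : ℕ → ℝ := fun n => (catalan n : ℝ) * x ^ n with hf
  have hsum : Summable f := cat_summable hx hx4
  have hnorm : Summable (fun n => ‖f n‖) := by
    apply hsum.congr
    intro n
    rw [Real.norm_eq_abs, abs_of_nonneg (by positivity)]
  set C := ∑' n, f n with hC
  -- Cauchy product
  have hcauchy : C * C = ∑' n, ((catalan (n+1) : ℝ) * x ^ n) := by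
    rw [hC, tsum_mul_tsum_eq_tsum_sum_antidiagonal_of_summable_norm hnorm hnorm]
    congr 1
    funext n
    have : ∀ kl ∈ Finset.HasAntidiagonal.antidiagonal n, f kl.1 * f kl.2
        = ((catalan kl.1 * catalan kl.2 : ℕ) : ℝ) * x ^ n := by
      intro kl hkl
      have hkl' : kl.1 + kl.2 = n := Finset.HasAntidiagonal.mem_antidiagonal.mp hkl
      push_cast
      rw [hf]
      simp only []
      rw [← hkl', pow_add]
      ring
    rw [Finset.sum_congr rfl this, ← Finset.sum_mul, ← Nat.cast_sum, ← catalan_succ' n]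
  -- quadratic equation
  have hquad : x * C^2 = C - 1 := by
    have h1 : x * C^2 = ∑' n, f (n+1) := by
      rw [sq, hcauchy, ← tsum_mul_left]
      congr 1; funext n; simp only [hf]; rw [pow_succ]; ring
    have h2 : C = f 0 + ∑' n, f (n+1) := Summable.tsum_eq_zero_add hsum
    have h3 : f 0 = 1 := by simp [hf]
    rw [h1, h2, h3]
    ring
  have hC2 : C ≤ 2 := cat_tsum_le_two hx (by linarith) hsum
  have hr0 : (0:ℝ) ≤ 1 - 4*x := by linarith
  set r := Real.sqrt (1 - 4*x) with hr
  have hrsq : r^2 = 1 - 4*x := Real.sq_sqrt hr0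
  have hrnn : 0 ≤ r := Real.sqrt_nonneg _
  have h2xC : 1 - 2*x*C ≥ 0 := by nlinarith
  have hkey : 1 - 2*x*C = r := by
    have hsq : (1 - 2*x*C)^2 = r^2 := by rw [hrsq]; nlinarith [hquad]
    calc 1 - 2*x*C = Real.sqrt ((1 - 2*x*C)^2) := (Real.sqrt_sq h2xC).symm
      _ = Real.sqrt (r^2) := by rw [hsq]
      _ = r := Real.sqrt_sq hrnn
  have h1r : 0 < 1 + r := by linarith
  rw [eq_div_iff (ne_of_gt h1r)]
  nlinarith [hquad, hkey]

lemma cos_pow_int_eq (M : ℕ) :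
    (∫ θ in (0:ℝ)..π, cos θ ^ (2*M)) = ∫ θ in (0:ℝ)..π, sin θ ^ (2*M) := by
  have h1 : (∫ θ in (0:ℝ)..π, cos θ ^ (2*M)) = ∫ θ in (0:ℝ)..π, (fun u => sin u ^ (2*M)) (θ + π/2) := by
    congr 1; funext θ; simp [Real.sin_add_pi_div_two]
  rw [h1, intervalIntegral.integral_comp_add_right (fun u => sin u ^ (2*M)) (π/2)]
  have hper : Function.Periodic (fun u => sin u ^ (2*M)) π := by
    intro u; simp [Real.sin_add_pi, pow_mul, neg_sq]
  have := hper.intervalIntegral_add_eq (π/2) 0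
  simp only [zero_add] at this
  rw [show (0:ℝ) + π/2 = π/2 by ring, show π + π/2 = π/2 + π by ring]
  exact this

lemma prod_eq_cb (M : ℕ) :
    (∏ i ∈ range M, (2*(i:ℝ)+1)/(2*i+2)) = Nat.centralBinom M / 4 ^ M := by
  induction M with
  | zero => simp [Nat.centralBinom]
  | succ M ih =>
    rw [Finset.prod_range_succ, ih]
    have h2 := cb_succ M
    have hM : ((M:ℝ)+1) ≠ 0 := by positivity
    have h4 : (Nat.centralBinom (M+1):ℝ) = 2*(2*M+1) * Nat.centralBinom M/((M:ℝ)+1) := by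
      rw [eq_div_iff hM]; linarith
    rw [pow_succ, h4]
    push_cast
    field_simp
    ring

lemma moment (M : ℕ) :
    (∫ θ in (0:ℝ)..π, cos θ ^ (2*M) * sin θ ^ 2) = π * (catalan M : ℝ) / (2 * 4 ^ M) := by
  have hsub : (∫ θ in (0:ℝ)..π, cos θ ^ (2*M) * sin θ ^ 2)
      = (∫ θ in (0:ℝ)..π, cos θ ^ (2*M)) - ∫ θ in (0:ℝ)..π, cos θ ^ (2*(M+1)) := by
    rw [← intervalIntegral.integral_sub]
    · congr 1; funext θ
      have : sin θ ^ 2 = 1 - cos θ ^ 2 := by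
        rw [Real.sin_sq]
      rw [this]
      ring
    · exact (Continuous.intervalIntegrable (by fun_prop) _ _)
    · exact (Continuous.intervalIntegrable (by fun_prop) _ _)
  rw [hsub, cos_pow_int_eq, cos_pow_int_eq, integral_sin_pow_even, integral_sin_pow_even,
    prod_eq_cb, prod_eq_cb]
  have h1 := cat_cb M
  have h2 := cb_succ M
  have hM : ((M:ℝ)+1) ≠ 0 := by positivity
  have h3 : (catalan M:ℝ) = Nat.centralBinom M/((M:ℝ)+1) := by rw [eq_div_iff hM]; linarith
  have h4 : (Nat.centralBinom (M+1):ℝ) = 2*(2*M+1) * Nat.centralBinom M/((M:ℝ)+1) := by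
    rw [eq_div_iff hM]; linarith
  rw [h3, h4, pow_succ]
  field_simp
  ring
noncomputable def Js (s : ℕ) : ℝ := ∫ θ in (0:ℝ)..π, sin θ ^ 2 / (1 + sin θ) ^ s

lemma tsum_pi_prod (g : ℕ → ENNReal) : ∀ (s : ℕ),
    ∑' m : Fin s → ℕ, ∏ i, g (m i) = (∑' n, g n) ^ s := by
  intro s
  induction s with
  | zero =>
    haveI : Unique (Fin 0 → ℕ) := ⟨⟨fun i => i.elim0⟩, fun f => funext fun i => i.elim0⟩
    rw [tsum_eq_single default (fun b hb => absurd (Subsingleton.elim b default) hb)]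
    simp
  | succ s ih =>
    rw [← (Fin.consEquiv (fun _ => ℕ)).tsum_eq]
    have : ∀ p : ℕ × (Fin s → ℕ),
        (∏ i, g ((Fin.consEquiv (fun _ => ℕ)) p i)) = g p.1 * ∏ i, g (p.2 i) := by
      intro p
      rw [Fin.prod_univ_succ]
      simp [Fin.consEquiv]
    rw [tsum_congr this, ENNReal.tsum_prod']
    simp_rw [ENNReal.tsum_mul_left, ENNReal.tsum_mul_right]
    rw [ih, pow_succ]
    ring

lemma term_integral (s : ℕ) (m : Fin s → ℕ) :
    (∏ i, (catalan (m i) : ℝ)) * (catalan (∑ i, m i) : ℝ) * ((16 : ℝ) ^ (∑ i, m i))⁻¹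
      = ∫ θ in (0:ℝ)..π,
          (2/π) * (sin θ ^ 2 * ∏ i, ((catalan (m i) : ℝ) * (cos θ ^ 2 / 4) ^ (m i))) := by
  set M := ∑ i, m i with hM
  have hprod : ∀ θ : ℝ, (∏ i, ((catalan (m i) : ℝ) * (cos θ ^ 2 / 4) ^ (m i)))
      = (∏ i, (catalan (m i) : ℝ)) * (cos θ ^ (2*M) / 4 ^ M) := by
    intro θ
    rw [Finset.prod_mul_distrib, Finset.prod_pow_eq_pow_sum, ← hM, div_pow, ← pow_mul]
  have : (∫ θ in (0:ℝ)..π,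
          (2/π) * (sin θ ^ 2 * ∏ i, ((catalan (m i) : ℝ) * (cos θ ^ 2 / 4) ^ (m i))))
      = ∫ θ in (0:ℝ)..π,
          ((2/π) * (∏ i, (catalan (m i) : ℝ)) / 4 ^ M) * (cos θ ^ (2*M) * sin θ ^ 2) := by
    congr 1; funext θ; rw [hprod θ]; ring
  rw [this, intervalIntegral.integral_const_mul, moment M]
  have hpi : (π:ℝ) ≠ 0 := Real.pi_ne_zero
  have h16 : (16:ℝ) ^ M = 4 ^ M * 4 ^ M := by
    rw [← mul_pow]; norm_num
  rw [h16]
  field_simp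


noncomputable def integrand (s : ℕ) (m : Fin s → ℕ) (θ : ℝ) : ℝ :=
  (2/Real.pi) * (Real.sin θ ^ 2 * ∏ i, ((catalan (m i) : ℝ) * (Real.cos θ ^ 2 / 4) ^ (m i)))

lemma integrand_cont (s : ℕ) (m : Fin s → ℕ) : Continuous (integrand s m) := by
  unfold integrand
  apply Continuous.mul continuous_const
  apply Continuous.mul (by fun_prop)
  apply continuous_finset_prod
  intro i _
  fun_prop

lemma integrand_nonneg (s : ℕ) (m : Fin s → ℕ) (θ : ℝ) : 0 ≤ integrand s m θ := by
  unfold integrand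
  apply mul_nonneg (by positivity)
  apply mul_nonneg (by positivity)
  exact Finset.prod_nonneg fun i _ => by positivity

lemma step2 (s : ℕ) (m : Fin s → ℕ) :
    ENNReal.ofReal ((∏ i, (catalan (m i) : ℝ)) * (catalan (∑ i, m i) : ℝ)
        * ((16 : ℝ) ^ (∑ i, m i))⁻¹)
      = ∫⁻ θ in Set.Ioo 0 π, ENNReal.ofReal (integrand s m θ) := by
  rw [show ((∏ i, (catalan (m i) : ℝ)) * (catalan (∑ i, m i) : ℝ)
        * ((16 : ℝ) ^ (∑ i, m i))⁻¹) = ∫ θ in (0:ℝ)..π, integrand s m θ from term_integral s m,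
    intervalIntegral.integral_of_le Real.pi_pos.le,
    MeasureTheory.ofReal_integral_eq_lintegral_ofReal
      (((integrand_cont s m).integrableOn_Icc).mono_set Set.Ioc_subset_Icc_self)
      (MeasureTheory.ae_of_all _ (integrand_nonneg s m))]
  exact MeasureTheory.setLIntegral_congr (MeasureTheory.Ioo_ae_eq_Ioc).symm

lemma one_add_sin_pos' (θ : ℝ) : (0:ℝ) ≤ 1 + Real.sin θ := by
  nlinarith [Real.neg_one_le_sin θ]

noncomputable def gs (s : ℕ) (θ : ℝ) : ℝ :=
  (2/Real.pi) * (Real.sin θ ^ 2 * (2/(1 + Real.sin θ)) ^ s)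

lemma gs_nonneg (s : ℕ) (θ : ℝ) : 0 ≤ gs s θ := by
  unfold gs
  have := one_add_sin_pos' θ
  apply mul_nonneg (by positivity)
  apply mul_nonneg (by positivity)
  exact pow_nonneg (div_nonneg (by norm_num) this) s

lemma gs_integrableOn (s : ℕ) :
    MeasureTheory.IntegrableOn (gs s) (Set.Ioc 0 π) MeasureTheory.volume := by
  apply MeasureTheory.IntegrableOn.mono_set _ Set.Ioc_subset_Icc_self
  apply ContinuousOn.integrableOn_Icc
  unfold gs
  apply ContinuousOn.mul continuousOn_const
  apply ContinuousOn.mul (Continuous.continuousOn (by fun_prop))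
  apply ContinuousOn.pow
  apply ContinuousOn.div continuousOn_const
    ((continuous_const.add Real.continuous_sin).continuousOn)
  intro θ hθ
  have : 0 ≤ Real.sin θ := Real.sin_nonneg_of_nonneg_of_le_pi hθ.1 hθ.2
  exact (by linarith : (0:ℝ) < 1 + Real.sin θ).ne'

lemma pointwise_sum (s : ℕ) {θ : ℝ} (hθ : θ ∈ Set.Ioo (0:ℝ) π) :
    ∑' m : Fin s → ℕ, ENNReal.ofReal (integrand s m θ) = ENNReal.ofReal (gs s θ) := by
  obtain ⟨h0, hπ⟩ := hθ
  have hsin : 0 < Real.sin θ := Real.sin_pos_of_pos_of_lt_pi h0 hπ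
  have hpyt := Real.sin_sq_add_cos_sq θ
  set x : ℝ := Real.cos θ^2/4 with hxdef
  have hx0 : 0 ≤ x := by positivity
  have hx4 : x < 1/4 := by
    have : Real.cos θ^2 < 1 := by nlinarith
    rw [hxdef]; linarith
  have hsummable := cat_summable hx0 hx4
  have hofprod : ∀ m : Fin s → ℕ, ENNReal.ofReal (integrand s m θ)
      = ENNReal.ofReal ((2/π) * Real.sin θ^2)
        * ∏ i, ENNReal.ofReal ((catalan (m i):ℝ) * x ^ (m i)) := by
    intro m
    unfold integrand
    rw [← ENNReal.ofReal_prod_of_nonneg (fun i _ => by positivity),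
      ← ENNReal.ofReal_mul (by positivity)]
    congr 1
    ring
  rw [tsum_congr hofprod, ENNReal.tsum_mul_left,
    tsum_pi_prod (fun n => ENNReal.ofReal ((catalan n:ℝ) * x^n)) s]
  have hgf : ∑' n, ENNReal.ofReal ((catalan n:ℝ) * x^n)
      = ENNReal.ofReal (2/(1 + Real.sin θ)) := by
    rw [← ENNReal.ofReal_tsum_of_nonneg (fun n => by positivity) hsummable, cat_gf hx0 hx4]
    congr 2
    have h14 : 1 - 4*x = Real.sin θ^2 := by rw [hxdef]; nlinarith
    rw [h14, Real.sqrt_sq hsin.le]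
  rw [hgf, ← ENNReal.ofReal_pow (by positivity), ← ENNReal.ofReal_mul (by positivity)]
  unfold gs
  congr 1
  ring

lemma ofReal_interval (f : ℝ → ℝ) (hint : MeasureTheory.IntegrableOn f (Set.Ioc 0 π) MeasureTheory.volume)
    (hnn : ∀ θ, 0 ≤ f θ) :
    ∫⁻ θ in Set.Ioo 0 π, ENNReal.ofReal (f θ) = ENNReal.ofReal (∫ θ in (0:ℝ)..π, f θ) := by
  rw [intervalIntegral.integral_of_le Real.pi_pos.le,
    MeasureTheory.ofReal_integral_eq_lintegral_ofReal hint (MeasureTheory.ae_of_all _ hnn)]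
  exact MeasureTheory.setLIntegral_congr MeasureTheory.Ioo_ae_eq_Ioc

lemma starSum_eq (s : ℕ) : starSum s = (2/π) * 2 ^ s * Js s := by
  have hterm_nonneg : ∀ m : Fin s → ℕ,
      0 ≤ (∏ i, (catalan (m i) : ℝ)) * (catalan (∑ i, m i) : ℝ) * ((16 : ℝ) ^ (∑ i, m i))⁻¹ := by
    intro m
    apply mul_nonneg (mul_nonneg (Finset.prod_nonneg fun i _ => by positivity) (by positivity))
    positivity
  have key : (∑' m : Fin s → ℕ, ENNReal.ofReal ((∏ i, (catalan (m i) : ℝ))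
        * (catalan (∑ i, m i) : ℝ) * ((16 : ℝ) ^ (∑ i, m i))⁻¹))
      = ENNReal.ofReal ((2/π) * 2 ^ s * Js s) := by
    rw [tsum_congr (step2 s), ← MeasureTheory.lintegral_tsum
      (fun m => ((integrand_cont s m).measurable.ennreal_ofReal).aemeasurable)]
    rw [MeasureTheory.setLIntegral_congr_fun measurableSet_Ioo
      (fun θ hθ => pointwise_sum s hθ)]
    rw [ofReal_interval (gs s) (gs_integrableOn s) (gs_nonneg s)]
    congr 1
    unfold Js gs
    rw [← intervalIntegral.integral_const_mul]
    congr 1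
    funext θ
    rw [div_pow]
    ring
  have h1 : starSum s = (∑' m : Fin s → ℕ, ENNReal.ofReal ((∏ i, (catalan (m i) : ℝ))
        * (catalan (∑ i, m i) : ℝ) * ((16 : ℝ) ^ (∑ i, m i))⁻¹)).toReal := by
    rw [ENNReal.tsum_toReal_eq (fun m => ENNReal.ofReal_ne_top)]
    unfold starSum
    congr 1
    funext m
    rw [ENNReal.toReal_ofReal (hterm_nonneg m)]
  have hJs : 0 ≤ Js s := by
    apply intervalIntegral.integral_nonneg Real.pi_pos.le
    intro u _
    exact div_nonneg (sq_nonneg _) (pow_nonneg (one_add_sin_pos' u) s)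
  rw [h1, key, ENNReal.toReal_ofReal (by positivity)]

lemma sin_ge_two_fifths {t : ℝ} (h0 : 0 < t) (h2 : t ≤ π/2) : 2/5 * t ≤ Real.sin t := by
  rcases le_or_gt t 1 with h1 | h1
  · have := Real.sin_gt_sub_cube h0
    have ht2 : t^2 ≤ 1 := by nlinarith
    nlinarith [mul_nonneg h0.le (sub_nonneg.mpr ht2)]
  · have hmem1 : (1:ℝ) ∈ Icc (-(π/2)) (π/2) := by
      constructor <;> nlinarith [Real.pi_gt_three]
    have hmemt : t ∈ Icc (-(π/2)) (π/2) := by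
      constructor <;> nlinarith [Real.pi_gt_three]
    have hmono := Real.strictMonoOn_sin.monotoneOn hmem1 hmemt h1.le
    have hsin1 : (3:ℝ)/4 < Real.sin 1 := by
      have := Real.sin_gt_sub_cube (by norm_num : (0:ℝ) < 1)
      nlinarith
    nlinarith [Real.pi_lt_d2]

lemma log_ge_half {y : ℝ} (h0 : 0 ≤ y) (h1 : y ≤ 1) : y/2 ≤ Real.log (1+y) := by
  have hpos : (0:ℝ) < 1 + y := by linarith
  have h := Real.log_le_sub_one_of_pos (show (0:ℝ) < (1+y)⁻¹ by positivity)
  rw [Real.log_inv] at h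
  have hinv : (1+y) * (1+y)⁻¹ = 1 := mul_inv_cancel₀ (ne_of_gt hpos)
  have hle : (1+y)⁻¹ ≤ 1 - y/2 := by nlinarith
  linarith

lemma integral_sq_exp : ∫ v in Ioi (0:ℝ), v^2 * Real.exp (-v) = 2 := by
  have h := Real.Gamma_eq_integral (show (0:ℝ) < 3 by norm_num)
  have h2 : Real.Gamma 3 = 2 := by
    have := Real.Gamma_nat_eq_factorial 2
    norm_num at this
    convert this using 2
    norm_num
  calc ∫ v in Ioi (0:ℝ), v^2 * Real.exp (-v)
      = ∫ x in Ioi (0:ℝ), Real.exp (-x) * x ^ ((3:ℝ) - 1) := by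
        apply MeasureTheory.setIntegral_congr_fun measurableSet_Ioi
        intro x hx
        simp only
        rw [show (3:ℝ) - 1 = ((2:ℕ):ℝ) by norm_num, Real.rpow_natCast]
        ring
    _ = 2 := by rw [← h, h2]

noncomputable def Ks (s : ℕ) : ℝ := ∫ θ in (0:ℝ)..(π/2), Real.sin θ ^ 2 / (1 + Real.sin θ) ^ s

lemma Fint (s : ℕ) {a b : ℝ} (ha : 0 ≤ a) (hb : b ≤ π) (hab : a ≤ b) :
    IntervalIntegrable (fun θ => Real.sin θ ^ 2 / (1 + Real.sin θ) ^ s)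
      MeasureTheory.volume a b := by
  apply ContinuousOn.intervalIntegrable
  have huIcc : uIcc a b = Icc a b := uIcc_of_le hab
  rw [huIcc]
  apply ContinuousOn.div (Continuous.continuousOn (by fun_prop))
  · exact ContinuousOn.pow ((continuous_const.add Real.continuous_sin).continuousOn) s
  · intro θ hθ
    have h1 : 0 ≤ Real.sin θ := Real.sin_nonneg_of_nonneg_of_le_pi
      (le_trans ha hθ.1) (le_trans hθ.2 hb)
    positivity

lemma Js_eq (s : ℕ) : Js s = 2 * Ks s := by
  have hsplit := intervalIntegral.integral_add_adjacent_intervals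
    (Fint s (a := 0) (b := π/2) (le_refl 0) (by linarith [Real.pi_pos]) (by positivity))
    (Fint s (a := π/2) (b := π) (by positivity) (le_refl π) (by linarith [Real.pi_pos]))
  have hsym : (∫ θ in (π/2)..π, Real.sin θ ^ 2 / (1 + Real.sin θ) ^ s) = Ks s := by
    have h := intervalIntegral.integral_comp_sub_left
      (fun θ => Real.sin θ ^ 2 / (1 + Real.sin θ) ^ s) π (a := 0) (b := π/2)
    simp only [sub_zero, Real.sin_pi_sub] at h
    rw [show π - π/2 = π/2 by ring] at h
    rw [← h]
    rfl
  unfold Js Ks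
  rw [← hsplit, hsym]
  unfold Ks
  ring

lemma Ks_scaled (s : ℕ) (hs : 1 ≤ s) :
    (s:ℝ)^3 * Ks s = ∫ v in Ioi (0:ℝ),
      Set.indicator (Ioc 0 ((s:ℝ)*π/2))
        (fun v => ((s:ℝ) * Real.sin (v/s))^2 / (1 + Real.sin (v/s))^s) v := by
  have hs0 : (0:ℝ) < s := by exact_mod_cast hs
  have hcomp := intervalIntegral.integral_comp_div
    (a := 0) (b := (s:ℝ)*π/2) (c := (s:ℝ))
    (f := fun θ => Real.sin θ ^ 2 / (1 + Real.sin θ) ^ s) (ne_of_gt hs0)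
  rw [zero_div, show ((s:ℝ)*π/2)/s = π/2 by field_simp] at hcomp
  have hKs : (s:ℝ)^3 * Ks s
      = ∫ v in (0:ℝ)..((s:ℝ)*π/2), (s:ℝ)^2 * (Real.sin (v/s) ^ 2 / (1 + Real.sin (v/s)) ^ s) := by
    rw [intervalIntegral.integral_const_mul, hcomp]
    unfold Ks
    simp only [smul_eq_mul]
    ring
  rw [hKs, intervalIntegral.integral_of_le (by positivity)]
  symm
  rw [MeasureTheory.setIntegral_indicator measurableSet_Ioc,
    Set.inter_eq_self_of_subset_right Set.Ioc_subset_Ioi_self]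
  congr 1
  funext v
  rw [mul_pow]
  ring

noncomputable def Fs (s : ℕ) : ℝ → ℝ :=
  Set.indicator (Ioc 0 ((s:ℝ)*π/2))
    (fun v => ((s:ℝ) * Real.sin (v/s))^2 / (1 + Real.sin (v/s))^s)

lemma Fs_lim {v : ℝ} (hv : 0 < v) :
    Tendsto (fun s : ℕ => Fs s v) atTop (nhds (v^2 * Real.exp (-v))) := by
  have hts : Tendsto (fun s:ℕ => v/(s:ℝ)) atTop (nhds 0) :=
    tendsto_const_div_atTop_nhds_zero_nat v
  have hts' : Tendsto (fun s:ℕ => v/(s:ℝ)) atTop (nhdsWithin 0 {(0:ℝ)}ᶜ) := by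
    rw [tendsto_nhdsWithin_iff]
    refine ⟨hts, ?_⟩
    filter_upwards [eventually_ge_atTop 1] with s hs
    have hs0 : (0:ℝ) < s := by exact_mod_cast hs
    exact ne_of_gt (div_pos hv hs0)
  have hsin_lim : Tendsto (fun s:ℕ => Real.sin (v/s)) atTop (nhds 0) := by
    have := (Real.continuous_sin.tendsto 0).comp hts
    simpa [Function.comp_def] using this
  have hA : Tendsto (fun s:ℕ => (s:ℝ) * Real.sin (v/s)) atTop (nhds v) := by
    have hslope : Tendsto (fun x : ℝ => Real.sin x / x) (nhdsWithin 0 {(0:ℝ)}ᶜ) (nhds 1) := by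
      have h := hasDerivAt_iff_tendsto_slope.mp (Real.hasDerivAt_sin 0)
      rw [Real.cos_zero] at h
      apply h.congr'
      filter_upwards [self_mem_nhdsWithin] with x hx
      rw [slope_def_field]
      simp
    have hcomp := hslope.comp hts'
    have heq : ∀ᶠ s : ℕ in atTop,
        v * (Real.sin (v/(s:ℝ)) / (v/(s:ℝ))) = (s:ℝ) * Real.sin (v/s) := by
      filter_upwards [eventually_ge_atTop 1] with s hs
      have hs0 : (0:ℝ) < s := by exact_mod_cast hs
      field_simp
    have h2 := (hcomp.const_mul v).congr' heq
    simpa using h2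
  have hB : Tendsto (fun s:ℕ => (s:ℝ) * Real.log (1 + Real.sin (v/s))) atTop (nhds v) := by
    have hlslope : Tendsto (fun y : ℝ => Real.log (1+y) / y) (nhdsWithin 0 {(0:ℝ)}ᶜ) (nhds 1) := by
      have h1 : HasDerivAt (fun y:ℝ => Real.log (1+y)) 1 0 := by
        have h0 : HasDerivAt (fun y:ℝ => 1+y) 1 0 := by
          simpa using (hasDerivAt_id (0:ℝ)).const_add 1
        have := (Real.hasDerivAt_log (by norm_num : (1:ℝ)+0 ≠ 0)).comp 0 h0
        simpa [Function.comp_def] using this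
      have h := hasDerivAt_iff_tendsto_slope.mp h1
      apply h.congr'
      filter_upwards [self_mem_nhdsWithin] with y hy
      rw [slope_def_field]
      simp
    have hsin_pos : ∀ᶠ s:ℕ in atTop, 0 < Real.sin (v/(s:ℝ)) := by
      filter_upwards [eventually_ge_atTop 1, hts.eventually (eventually_lt_nhds Real.pi_pos)]
        with s hs hsπ
      have hs0 : (0:ℝ) < s := by exact_mod_cast hs
      exact Real.sin_pos_of_pos_of_lt_pi (div_pos hv hs0) hsπ
    have hsin_ne : Tendsto (fun s:ℕ => Real.sin (v/s)) atTop (nhdsWithin 0 {(0:ℝ)}ᶜ) := by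
      rw [tendsto_nhdsWithin_iff]
      refine ⟨hsin_lim, ?_⟩
      filter_upwards [hsin_pos] with s hpos
      exact ne_of_gt hpos
    have hcomp := hlslope.comp hsin_ne
    have heq : ∀ᶠ s : ℕ in atTop,
        ((s:ℝ) * Real.sin (v/s)) * (Real.log (1 + Real.sin (v/(s:ℝ))) / Real.sin (v/(s:ℝ)))
          = (s:ℝ) * Real.log (1 + Real.sin (v/s)) := by
      filter_upwards [hsin_pos] with s hpos
      field_simp
    have h2 := (hA.mul hcomp).congr' heq
    simpa using h2
  have hsin_pos : ∀ᶠ s:ℕ in atTop, 0 < Real.sin (v/(s:ℝ)) := by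
    filter_upwards [eventually_ge_atTop 1, hts.eventually (eventually_lt_nhds Real.pi_pos)]
      with s hs hsπ
    have hs0 : (0:ℝ) < s := by exact_mod_cast hs
    exact Real.sin_pos_of_pos_of_lt_pi (div_pos hv hs0) hsπ
  have hmain : Tendsto (fun s:ℕ => ((s:ℝ)*Real.sin (v/s))^2 / (1+Real.sin (v/s))^s)
      atTop (nhds (v^2 * Real.exp (-v))) := by
    have h1 : Tendsto (fun s:ℕ => ((s:ℝ)*Real.sin (v/s))^2) atTop (nhds (v^2)) := hA.pow 2
    have h2 : Tendsto (fun s:ℕ => Real.exp (-((s:ℝ) * Real.log (1+Real.sin (v/s)))))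
        atTop (nhds (Real.exp (-v))) := (Real.continuous_exp.tendsto _).comp hB.neg
    have heq : ∀ᶠ s : ℕ in atTop,
        ((s:ℝ)*Real.sin (v/s))^2 * Real.exp (-((s:ℝ)*Real.log (1+Real.sin (v/(s:ℝ)))))
          = ((s:ℝ)*Real.sin (v/s))^2 / (1+Real.sin (v/s))^s := by
      filter_upwards [hsin_pos] with s hpos
      have hpos1 : (0:ℝ) < 1 + Real.sin (v/(s:ℝ)) := by linarith
      rw [div_eq_mul_inv]
      congr 1
      rw [Real.exp_neg]
      congr 1
      have hpos1' : (0:ℝ) < 1 + Real.sin (v * ((s:ℝ))⁻¹) := by rwa [← div_eq_mul_inv]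
      rw [Real.exp_nat_mul, Real.exp_log hpos1']
    exact (h1.mul h2).congr' heq
  have hind : ∀ᶠ s:ℕ in atTop,
      ((s:ℝ)*Real.sin (v/s))^2 / (1+Real.sin (v/s))^s = Fs s v := by
    filter_upwards [eventually_ge_atTop (max 1 ⌈v⌉₊)] with s hs
    have h1 : v ≤ (s:ℝ) := by
      calc v ≤ (⌈v⌉₊:ℝ) := Nat.le_ceil v
        _ ≤ (s:ℝ) := by exact_mod_cast le_trans (le_max_right _ _) hs
    have h2 : v ≤ (s:ℝ)*π/2 := by nlinarith [Real.pi_gt_three]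
    unfold Fs
    rw [Set.indicator_of_mem (Set.mem_Ioc.mpr ⟨hv, h2⟩)]
  exact hmain.congr' hind
lemma Fs_meas (n : ℕ) : MeasureTheory.AEStronglyMeasurable (Fs n)
    (MeasureTheory.volume.restrict (Ioi (0:ℝ))) := by
  apply Measurable.aestronglyMeasurable
  apply Measurable.indicator _ measurableSet_Ioc
  fun_prop

lemma bound_integrable : MeasureTheory.Integrable (fun v => v^2 * Real.exp (-(v/5)))
    (MeasureTheory.volume.restrict (Ioi (0:ℝ))) := by
  have h := integrableOn_rpow_mul_exp_neg_mul_rpow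
    (p := 1) (s := 2) (b := 1/5) (by norm_num) (by norm_num) (by norm_num)
  apply (h.congr_fun _ measurableSet_Ioi)
  intro x hx
  simp only
  rw [Real.rpow_one, show (2:ℝ) = ((2:ℕ):ℝ) by norm_num, Real.rpow_natCast]
  ring_nf

lemma Fs_bound (n : ℕ) : ∀ᵐ v ∂(MeasureTheory.volume.restrict (Ioi (0:ℝ))),
    ‖Fs n v‖ ≤ v^2 * Real.exp (-(v/5)) := by
  rw [MeasureTheory.ae_restrict_iff' measurableSet_Ioi]
  apply MeasureTheory.ae_of_all
  intro v hv
  by_cases hmem : v ∈ Ioc (0:ℝ) ((n:ℝ)*π/2)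
  · unfold Fs
    rw [Set.indicator_of_mem hmem]
    have hv0 : (0:ℝ) < v := hmem.1
    have hn0 : (0:ℝ) < n := by
      rcases Nat.eq_zero_or_pos n with h | h
      · exfalso
        rw [h] at hmem
        have := hmem.2
        simp at this
        nlinarith [hmem.1]
      · exact_mod_cast h
    set t := v/(n:ℝ) with htdef
    have ht0 : 0 < t := div_pos hv0 hn0
    have ht2 : t ≤ π/2 := by
      rw [htdef, div_le_iff₀ hn0]
      nlinarith [hmem.2]
    have hvt : (n:ℝ) * t = v := by rw [htdef]; field_simp
    have hsin0 : 0 ≤ Real.sin t := Real.sin_nonneg_of_nonneg_of_le_pi ht0.le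
      (by linarith [Real.pi_pos])
    have hsin1 : Real.sin t ≤ 1 := Real.sin_le_one t
    have hnum : ((n:ℝ) * Real.sin t)^2 ≤ v^2 := by
      have h1 : (n:ℝ) * Real.sin t ≤ v := by
        calc (n:ℝ) * Real.sin t ≤ (n:ℝ) * t :=
              mul_le_mul_of_nonneg_left (Real.sin_le ht0.le) hn0.le
          _ = v := hvt
      have h2 : 0 ≤ (n:ℝ) * Real.sin t := mul_nonneg hn0.le hsin0
      nlinarith
    have hden : Real.exp (v/5) ≤ (1 + Real.sin t)^n := by
      have hlog : v/5 ≤ (n:ℝ) * Real.log (1 + Real.sin t) := by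
        have hl1 := log_ge_half hsin0 hsin1
        have hl2 := sin_ge_two_fifths ht0 ht2
        have hstep : (n:ℝ) * (2/5 * t) / 2 ≤ (n:ℝ) * Real.sin t / 2 := by
          linarith [mul_le_mul_of_nonneg_left hl2 hn0.le]
        calc v/5 = (n:ℝ) * (2/5 * t) / 2 := by rw [← hvt]; ring
          _ ≤ (n:ℝ) * Real.sin t / 2 := hstep
          _ = (n:ℝ) * (Real.sin t / 2) := by ring
          _ ≤ (n:ℝ) * Real.log (1 + Real.sin t) := mul_le_mul_of_nonneg_left hl1 hn0.le
      calc Real.exp (v/5) ≤ Real.exp ((n:ℝ) * Real.log (1+Real.sin t)) :=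
            Real.exp_le_exp.mpr hlog
        _ = (1 + Real.sin t)^n := by
            rw [Real.exp_nat_mul, Real.exp_log (by linarith : (0:ℝ) < 1 + Real.sin t)]
    rw [Real.norm_eq_abs, abs_of_nonneg (div_nonneg (sq_nonneg _)
      (pow_nonneg (by linarith : (0:ℝ) ≤ 1 + Real.sin t) n))]
    calc ((n:ℝ)*Real.sin t)^2/(1+Real.sin t)^n ≤ v^2 / Real.exp (v/5) :=
          div_le_div₀ (sq_nonneg v) hnum (Real.exp_pos _) hden
      _ = v^2 * Real.exp (-(v/5)) := by rw [Real.exp_neg]; ring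
  · unfold Fs
    rw [Set.indicator_of_notMem hmem]
    simp only [norm_zero]
    positivity

lemma Ks_lim : Tendsto (fun s : ℕ => (s:ℝ)^3 * Ks s) atTop (nhds 2) := by
  have hdct : Tendsto (fun s : ℕ => ∫ v in Ioi (0:ℝ), Fs s v) atTop
      (nhds (∫ v in Ioi (0:ℝ), v^2 * Real.exp (-v))) := by
    apply MeasureTheory.tendsto_integral_of_dominated_convergence
      (fun v => v^2 * Real.exp (-(v/5))) Fs_meas bound_integrable Fs_bound
    rw [MeasureTheory.ae_restrict_iff' measurableSet_Ioi]
    exact MeasureTheory.ae_of_all _ (fun v hv => Fs_lim hv)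
  rw [integral_sq_exp] at hdct
  apply hdct.congr'
  filter_upwards [eventually_ge_atTop 1] with s hs
  exact (Ks_scaled s hs).symm

end StarSumAux

/-- `A_s ∼ (8/π)·2^s/s³` as `s → ∞`. -/
theorem stmt_16 :
    Tendsto (fun s : ℕ => starSum s * (s : ℝ) ^ 3 / 2 ^ s) atTop (nhds (8 / π)) := by
  have heq : ∀ s : ℕ, starSum s * (s : ℝ) ^ 3 / 2 ^ s = (4/π) * ((s:ℝ)^3 * Ks s) := by
    intro s
    rw [starSum_eq s, Js_eq s]
    have h2 : (2:ℝ)^s ≠ 0 := by positivity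
    field_simp
    ring
  have hlim : Tendsto (fun s : ℕ => (4/π) * ((s:ℝ)^3 * Ks s)) atTop (nhds ((4/π) * 2)) :=
    Ks_lim.const_mul _
  rw [show (8:ℝ)/π = (4/π) * 2 by ring]
  exact hlim.congr (fun s => (heq s).symm)
end

section
/- For every integer s ≥ 1, one has (2s+3)·A_{s+2} − 2(3s−2)·A_{s+1} + 4(s−2)·A_s = 0, where A_s = ∑_{(m₁,…,m_s) ∈ ℕ^s} Cat_{m₁} ⋯ Cat_{m_s} · Cat_{m₁+⋯+m_s} · 16^{−(m₁+⋯+m_s)}. -/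
open Real

open Finset Filter

noncomputable def catPS : PowerSeries ℝ := PowerSeries.mk fun n => (catalan n : ℝ)

noncomputable def Kc (s n : ℕ) : ℝ := PowerSeries.coeff n (catPS ^ s)

noncomputable def aa (s n : ℕ) : ℝ := Kc s n * (catalan n : ℝ) * ((16 : ℝ) ^ n)⁻¹

noncomputable def G (s n : ℕ) : ℝ :=
  -8 * ((s:ℝ) + 2) * (n:ℝ) * ((n:ℝ) + 1) / ((s:ℝ) * ((s:ℝ) + (n:ℝ) + 1)) * aa s n

lemma catPS_eq : catPS = 1 + PowerSeries.X * catPS ^ 2 := by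
  ext n
  cases n with
  | zero => simp [catPS]
  | succ n =>
    rw [map_add, PowerSeries.coeff_succ_X_mul, sq, PowerSeries.coeff_mul]
    simp only [catPS, PowerSeries.coeff_mk, PowerSeries.coeff_one, Nat.succ_ne_zero, if_false,
      zero_add]
    rw [catalan_succ' n]
    push_cast
    rfl

lemma Kc_zero (s : ℕ) : Kc s 0 = 1 := by
  simp [Kc, PowerSeries.coeff_zero_eq_constantCoeff, map_pow, catPS]

lemma Kc_one (n : ℕ) : Kc 1 n = (catalan n : ℝ) := by
  simp [Kc, catPS]

lemma Kc_rec (s n : ℕ) : Kc (s + 1) (n + 1) = Kc s (n + 1) + Kc (s + 2) n := by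
  have h : catPS ^ (s + 1) = catPS ^ s + PowerSeries.X * catPS ^ (s + 2) := by
    calc catPS ^ (s+1) = catPS ^ s * catPS := by ring
    _ = catPS ^ s * (1 + PowerSeries.X * catPS ^ 2) := by rw [← catPS_eq]
    _ = catPS ^ s + PowerSeries.X * catPS ^ (s + 2) := by ring
  simp [Kc, h, PowerSeries.coeff_succ_X_mul]

lemma Kc_sum (s n : ℕ) :
    Kc s n = ∑ m ∈ Finset.Nat.antidiagonalTuple s n, ∏ i, (catalan (m i) : ℝ) := by
  have h : catPS ^ s = ∏ _i : Fin s, catPS := by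
    rw [Finset.prod_const, Finset.card_univ, Fintype.card_fin]
  rw [Kc, h, PowerSeries.coeff_prod]
  refine Finset.sum_nbij' (fun l => ⇑l) (fun m => Finsupp.equivFunOnFinite.symm m) ?_ ?_ ?_ ?_ ?_
  · intro l hl
    rw [Finset.mem_finsuppAntidiag] at hl
    rw [Finset.Nat.mem_antidiagonalTuple]
    exact hl.1
  · intro m hm
    rw [Finset.Nat.mem_antidiagonalTuple] at hm
    rw [Finset.mem_finsuppAntidiag]
    exact ⟨hm, by simp⟩
  · intro l _; exact Finsupp.ext fun i => rfl
  · intro m _; rfl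
  · intro l _
    simp [catPS]

-- (2n+1) * catalan n = choose (2n+1) n
lemma L3 (n : ℕ) : (2 * n + 1) * catalan n = (2 * n + 1).choose n := by
  have h1 : (n + 1) * catalan n = (2 * n).choose n := by
    rw [succ_mul_catalan_eq_centralBinom]; rfl
  have h2 : (2 * n + 1) * (2 * n).choose n = (2 * n + 1).choose (n + 1) * (n + 1) :=
    Nat.add_one_mul_choose_eq (2 * n) n
  have h3 : (2 * n + 1).choose (n + 1) = (2 * n + 1).choose n := by
    rw [← Nat.choose_symm (by omega : n + 1 ≤ 2 * n + 1)]
    congr 1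
    omega
  apply Nat.eq_of_mul_eq_mul_left (show 0 < n + 1 by omega)
  calc (n + 1) * ((2 * n + 1) * catalan n) = (2 * n + 1) * ((n + 1) * catalan n) := by ring
  _ = (2 * n + 1) * (2 * n).choose n := by rw [h1]
  _ = (2 * n + 1).choose (n + 1) * (n + 1) := h2
  _ = (n + 1) * (2 * n + 1).choose n := by rw [h3]; ring

-- (n+2) * catalan (n+1) = 2*(2n+1)*catalan n
lemma L5 (n : ℕ) : (n + 2) * catalan (n + 1) = 2 * (2 * n + 1) * catalan n := by
  have h1 : (n + 1) * catalan n = Nat.centralBinom n := succ_mul_catalan_eq_centralBinom n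
  have h1' : (n + 2) * catalan (n + 1) = Nat.centralBinom (n + 1) := by
    have := succ_mul_catalan_eq_centralBinom (n + 1)
    simpa using this
  have h2 := Nat.succ_mul_centralBinom_succ n
  apply Nat.eq_of_mul_eq_mul_left (show 0 < n + 1 by omega)
  calc (n + 1) * ((n + 2) * catalan (n + 1)) = (n + 1) * Nat.centralBinom (n + 1) := by rw [h1']
  _ = 2 * (2 * n + 1) * Nat.centralBinom n := h2
  _ = 2 * (2 * n + 1) * ((n + 1) * catalan n) := by rw [h1]
  _ = (n + 1) * (2 * (2 * n + 1) * catalan n) := by ring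

-- choose (2n+s) n ≤ 2^s * choose(2n) n
lemma L1 (s n : ℕ) : (2 * n + s).choose n ≤ 2 ^ s * (2 * n).choose n := by
  induction s with
  | zero => simp
  | succ s ih =>
    have step : (2 * n + (s + 1)).choose n ≤ 2 * (2 * n + s).choose n := by
      cases n with
      | zero => simp
      | succ m =>
        have hpas : (2 * (m + 1) + (s + 1)).choose (m + 1)
            = (2 * (m + 1) + s).choose m + (2 * (m + 1) + s).choose (m + 1) := by
          have : 2 * (m + 1) + (s + 1) = (2 * (m + 1) + s) + 1 := by omega
          rw [this, Nat.choose_succ_succ']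
        have hmono : (2 * (m + 1) + s).choose m ≤ (2 * (m + 1) + s).choose (m + 1) := by
          apply Nat.choose_le_succ_of_lt_half_left
          omega
        omega
    calc (2 * n + (s + 1)).choose n ≤ 2 * (2 * n + s).choose n := step
    _ ≤ 2 * (2 ^ s * (2 * n).choose n) := by omega
    _ = 2 ^ (s + 1) * (2 * n).choose n := by ring

-- choose(2n) n ≤ 4^n
lemma L2 (n : ℕ) : (2 * n).choose n ≤ 4 ^ n := by
  have h : (2 * n).choose n ≤ ∑ m ∈ range (2 * n + 1), (2 * n).choose m :=
    Finset.single_le_sum (f := fun m => (2 * n).choose m) (fun _ _ => Nat.zero_le _)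
      (by simp [Nat.lt_succ_iff]; omega)
  rw [Nat.sum_range_choose] at h
  calc (2 * n).choose n ≤ 2 ^ (2 * n) := h
  _ = 4 ^ n := by rw [pow_mul]; norm_num

lemma Kc_closed : ∀ n s : ℕ, 1 ≤ s →
    ((2 * n + s : ℕ) : ℝ) * Kc s n = (s : ℝ) * (((2 * n + s).choose n : ℕ) : ℝ) := by
  intro n
  induction n with
  | zero =>
    intro s hs
    simp [Kc_zero]
  | succ n ih =>
    intro s hs
    induction s, hs using Nat.le_induction with
    | base =>
      have := L3 (n + 1)
      have h : ((2 * (n + 1) + 1) : ℝ) * (catalan (n + 1) : ℝ)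
          = (((2 * (n + 1) + 1).choose (n + 1) : ℕ) : ℝ) := by exact_mod_cast congrArg Nat.cast this
      rw [Kc_one]
      push_cast at h ⊢
      linarith [h]
    | succ s hs ihs =>
      -- M = 2*n + s + 2
      set M := 2 * n + s + 2 with hM
      have hMeq : 2 * (n + 1) + s = M := by omega
      have hKs : ((M : ℕ) : ℝ) * Kc s (n + 1) = (s : ℝ) * ((M.choose (n + 1) : ℕ) : ℝ) := by
        have := ihs
        rw [hMeq] at this
        convert this using 3 <;> omega
      have hK2 : ((M : ℕ) : ℝ) * Kc (s + 2) n = ((s + 2 : ℕ) : ℝ) * ((M.choose n : ℕ) : ℝ) := by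
        have := ih (s + 2) (by omega)
        rw [show 2 * n + (s + 2) = M by omega] at this; exact this
      have hrel : (M.choose (n + 1) : ℝ) * ((n + 1 : ℕ) : ℝ)
          = (M.choose n : ℝ) * ((n + s + 2 : ℕ) : ℝ) := by
        have h := Nat.choose_succ_right_eq M n
        have h2 : M - n = n + s + 2 := by omega
        rw [h2] at h
        exact_mod_cast congrArg Nat.cast h
      have hpas : (M + 1).choose (n + 1) = M.choose n + M.choose (n + 1) :=
        Nat.choose_succ_succ M n
      have hgoal2 : 2 * (n + 1) + (s + 1) = M + 1 := by omega
      rw [hgoal2, Kc_rec]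
      have hMne : ((M : ℕ) : ℝ) ≠ 0 := by positivity
      apply mul_left_cancel₀ hMne
      have expand : ((M : ℕ) : ℝ) * (((M + 1 : ℕ) : ℝ) * (Kc s (n + 1) + Kc (s + 2) n))
          = ((M + 1 : ℕ) : ℝ) * (((M : ℕ) : ℝ) * Kc s (n + 1) + ((M : ℕ) : ℝ) * Kc (s + 2) n) := by
        ring
      rw [expand, hKs, hK2, hpas]
      push_cast at hrel ⊢
      rw [show ((M:ℕ):ℝ) = 2 * (n:ℝ) + s + 2 by rw [hM]; push_cast; ring]
      nlinarith [hrel]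

lemma Kc_nonneg (s n : ℕ) : 0 ≤ Kc s n := by
  rw [Kc_sum]
  exact Finset.sum_nonneg fun m _ => Finset.prod_nonneg fun i _ => by positivity

lemma aa_nonneg (s n : ℕ) : 0 ≤ aa s n := by
  have := Kc_nonneg s n
  unfold aa; positivity

-- key bound
lemma aa_le (s n : ℕ) (hs : 1 ≤ s) :
    aa s n ≤ (s : ℝ) * 2 ^ s * (((n : ℝ) + 1) ^ 2)⁻¹ := by
  have hN1 : (n + 1) * catalan n = (2 * n).choose n := by
    rw [succ_mul_catalan_eq_centralBinom]; rfl
  have hN2 : (2 * n + s).choose n * ((n + 1) * catalan n) ≤ 2 ^ s * 16 ^ n := by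
    calc (2 * n + s).choose n * ((n + 1) * catalan n)
        = (2 * n + s).choose n * (2 * n).choose n := by rw [hN1]
      _ ≤ (2 ^ s * (2 * n).choose n) * (2 * n).choose n :=
          Nat.mul_le_mul_right _ (L1 s n)
      _ = 2 ^ s * ((2 * n).choose n * (2 * n).choose n) := by ring
      _ ≤ 2 ^ s * (4 ^ n * 4 ^ n) :=
          Nat.mul_le_mul_left _ (Nat.mul_le_mul (L2 n) (L2 n))
      _ = 2 ^ s * 16 ^ n := by rw [← Nat.mul_pow]
  -- real versions
  have h16 : (0:ℝ) < 16 ^ n := by positivity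
  have hMpos : (0:ℝ) < ((2 * n + s : ℕ) : ℝ) := by
    have : 1 ≤ 2 * n + s := by omega
    exact_mod_cast Nat.lt_of_lt_of_le Nat.zero_lt_one this
  have hKc : Kc s n = (s : ℝ) * (((2 * n + s).choose n : ℕ) : ℝ) / ((2 * n + s : ℕ) : ℝ) := by
    rw [eq_div_iff (ne_of_gt hMpos)]
    rw [mul_comm (Kc s n) _] at *
    linarith [Kc_closed n s hs]
  have hR2 : ((((2 * n + s).choose n : ℕ) : ℝ)) * (((n:ℝ) + 1) * (catalan n : ℝ))
      ≤ 2 ^ s * 16 ^ n := by exact_mod_cast hN2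
  have hcat : (0:ℝ) ≤ (catalan n : ℝ) := by positivity
  have hch : (0:ℝ) ≤ (((2 * n + s).choose n : ℕ) : ℝ) := by positivity
  rw [aa, hKc]
  rw [div_mul_eq_mul_div, div_mul_eq_mul_div, div_le_iff₀ hMpos]
  rw [inv_eq_one_div, mul_comm ((s:ℝ) * 2 ^ s) _, one_div, ← div_eq_inv_mul]
  rw [div_mul_eq_mul_div, le_div_iff₀ (by positivity)]
  -- goal: s * choose * cat * (16^n)⁻¹ * ((n+1)^2) ≤ s*2^s * (2n+s)
  have key : (s : ℝ) * ((((2 * n + s).choose n : ℕ) : ℝ) * (((n:ℝ)+1) * (catalan n : ℝ)))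
      ≤ (s : ℝ) * (2 ^ s * 16 ^ n) := by
    apply mul_le_mul_of_nonneg_left hR2 (by positivity)
  have hn1 : ((n:ℝ) + 1) ≤ ((2 * n + s : ℕ) : ℝ) := by
    have hs' : (1:ℝ) ≤ (s:ℝ) := by exact_mod_cast hs
    push_cast
    linarith [Nat.cast_nonneg (α := ℝ) n]
  calc (s : ℝ) * (((2 * n + s).choose n : ℕ) : ℝ) * (catalan n : ℝ) * ((16:ℝ) ^ n)⁻¹ * ((n:ℝ)+1) ^ 2
      = ((s : ℝ) * ((((2 * n + s).choose n : ℕ) : ℝ) * (((n:ℝ)+1) * (catalan n : ℝ)))) * (((n:ℝ)+1) * ((16:ℝ) ^ n)⁻¹) := by ring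
    _ ≤ ((s : ℝ) * (2 ^ s * 16 ^ n)) * (((n:ℝ)+1) * ((16:ℝ) ^ n)⁻¹) := by
        apply mul_le_mul_of_nonneg_right key (by positivity)
    _ = (s : ℝ) * 2 ^ s * ((n:ℝ)+1) := by field_simp
    _ ≤ (s : ℝ) * 2 ^ s * ((2 * n + s : ℕ) : ℝ) := by
        apply mul_le_mul_of_nonneg_left hn1 (by positivity)

lemma summable_aux : Summable (fun n : ℕ => (((n : ℝ) + 1) ^ 2)⁻¹) := by
  have h : Summable (fun n : ℕ => ((n : ℝ) ^ 2)⁻¹) :=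
    Real.summable_nat_pow_inv.mpr one_lt_two
  have := (summable_nat_add_iff 1).mpr h
  refine this.congr fun n => ?_
  push_cast
  ring_nf

lemma summable_aa (s : ℕ) (hs : 1 ≤ s) : Summable (aa s) := by
  apply Summable.of_nonneg_of_le (aa_nonneg s) (fun n => aa_le s n hs)
  exact (summable_aux.mul_left _)

lemma starSum_eq_s18 (s : ℕ) (hs : 1 ≤ s) : starSum s = ∑' n, aa s n := by
  classical
  set f : (Fin s → ℕ) → ℝ := fun m =>
    (∏ i, (catalan (m i) : ℝ)) * (catalan (∑ i, m i) : ℝ) * ((16 : ℝ) ^ (∑ i, m i))⁻¹ with hf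
  set e := Finset.Nat.sigmaAntidiagonalTupleEquivTuple s
  have hfiber : ∀ n : ℕ, ∑' m : Finset.Nat.antidiagonalTuple s n, f (e ⟨n, m⟩) = aa s n := by
    intro n
    have h1 : ∀ m : Finset.Nat.antidiagonalTuple s n,
        f (e ⟨n, m⟩) = (∏ i, (catalan ((m : Fin s → ℕ) i) : ℝ)) * ((catalan n : ℝ) * ((16 : ℝ) ^ n)⁻¹) := by
      rintro ⟨m, hm⟩
      have hsum : ∑ i, m i = n := Finset.Nat.mem_antidiagonalTuple.mp hm
      have hem : e ⟨n, ⟨m, hm⟩⟩ = m := rfl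
      rw [hf, hem]
      simp only [hsum]
      ring
    rw [tsum_congr h1, tsum_fintype]
    rw [Finset.sum_coe_sort (Finset.Nat.antidiagonalTuple s n)
      (fun m => (∏ i, (catalan (m i) : ℝ)) * ((catalan n : ℝ) * ((16 : ℝ) ^ n)⁻¹))]
    rw [← Finset.sum_mul, ← Kc_sum]
    unfold aa; ring
  have hnonneg : ∀ p : (Σ n : ℕ, Finset.Nat.antidiagonalTuple s n), 0 ≤ f (e p) := by
    rintro ⟨n, m⟩
    simp only [hf]
    have : (0:ℝ) ≤ ∏ i, (catalan ((m : Fin s → ℕ) i) : ℝ) :=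
      Finset.prod_nonneg fun i _ => by positivity
    positivity
  have hsummable_fibers : ∀ n : ℕ, Summable fun m : Finset.Nat.antidiagonalTuple s n =>
      f (e ⟨n, m⟩) := fun n => Summable.of_finite
  have hsummable_outer : Summable fun n : ℕ =>
      ∑' m : Finset.Nat.antidiagonalTuple s n, f (e ⟨n, m⟩) := by
    refine (summable_aa s hs).congr fun n => ?_
    exact (hfiber n).symm
  have hsig : Summable (fun p : (Σ n : ℕ, Finset.Nat.antidiagonalTuple s n) => f (e p)) :=
    (summable_sigma_of_nonneg hnonneg).mpr ⟨hsummable_fibers, hsummable_outer⟩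
  have h2 : starSum s = ∑' p : (Σ n : ℕ, Finset.Nat.antidiagonalTuple s n), f (e p) :=
    (e.tsum_eq f).symm
  rw [h2, hsig.tsum_sigma' hsummable_fibers]
  exact tsum_congr hfiber


lemma aa_closed (s n : ℕ) (hs : 1 ≤ s) :
    aa s n = (s : ℝ) * (((2 * n + s).choose n : ℕ) : ℝ) * (catalan n : ℝ)
      / ((2 * (n:ℝ) + (s:ℝ)) * (16:ℝ) ^ n) := by
  have hM : (0:ℝ) < 2 * (n:ℝ) + (s:ℝ) := by
    have : (1:ℝ) ≤ (s:ℝ) := by exact_mod_cast hs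
    have : (0:ℝ) ≤ (n:ℝ) := Nat.cast_nonneg n
    linarith
  have h := Kc_closed n s hs
  push_cast at h
  have hK : Kc s n = (s : ℝ) * (((2 * n + s).choose n : ℕ) : ℝ) / (2 * (n:ℝ) + (s:ℝ)) := by
    rw [eq_div_iff (ne_of_gt hM)]
    linarith [h]
  rw [aa, hK]
  field_simp

set_option maxHeartbeats 2000000 in
lemma cert (s n : ℕ) (hs : 1 ≤ s) :
    (2 * (s:ℝ) + 3) * aa (s + 2) n - 2 * (3 * (s:ℝ) - 2) * aa (s + 1) n
      + 4 * ((s:ℝ) - 2) * aa s n = G s (n + 1) - G s n := by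
  have hS : (1:ℝ) ≤ (s:ℝ) := by exact_mod_cast hs
  have hN : (0:ℝ) ≤ (n:ℝ) := Nat.cast_nonneg n
  -- closed forms
  have h_a0 : aa s n = (s:ℝ) * (((2 * n + s).choose n : ℕ) : ℝ) * (catalan n : ℝ)
      / ((2 * (n:ℝ) + (s:ℝ)) * (16:ℝ) ^ n) := aa_closed s n hs
  have h_a1 : aa (s + 1) n = ((s:ℝ) + 1) * (((2 * n + s + 1).choose n : ℕ) : ℝ) * (catalan n : ℝ)
      / ((2 * (n:ℝ) + (s:ℝ) + 1) * (16:ℝ) ^ n) := by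
    have h := aa_closed (s + 1) n (by omega)
    have e1 : 2 * n + (s + 1) = 2 * n + s + 1 := rfl
    rw [e1] at h
    rw [h]
    push_cast
    ring_nf
  have h_a2 : aa (s + 2) n = ((s:ℝ) + 2) * (((2 * n + s + 2).choose n : ℕ) : ℝ) * (catalan n : ℝ)
      / ((2 * (n:ℝ) + (s:ℝ) + 2) * (16:ℝ) ^ n) := by
    have h := aa_closed (s + 2) n (by omega)
    have e1 : 2 * n + (s + 2) = 2 * n + s + 2 := rfl
    rw [e1] at h
    rw [h]
    push_cast
    ring_nf
  have h_a3 : aa s (n + 1) = (s:ℝ) * (((2 * n + s + 2).choose (n + 1) : ℕ) : ℝ)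
      * (catalan (n + 1) : ℝ)
      / ((2 * (n:ℝ) + (s:ℝ) + 2) * (16 * (16:ℝ) ^ n)) := by
    have h := aa_closed s (n + 1) hs
    have e1 : 2 * (n + 1) + s = 2 * n + s + 2 := by omega
    rw [e1] at h
    rw [h]
    have e2 : (16:ℝ) ^ (n + 1) = 16 * (16:ℝ) ^ n := by ring
    rw [e2]
    push_cast
    ring_nf
  -- binomial relations
  have hx1r : (((2 * n + s + 1).choose n : ℕ) : ℝ) * ((n:ℝ) + (s:ℝ) + 1)
      = (((2 * n + s).choose n : ℕ) : ℝ) * (2 * (n:ℝ) + (s:ℝ) + 1) := by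
    have h := Nat.choose_mul_succ_eq (2 * n + s) n
    have e : 2 * n + s + 1 - n = n + s + 1 := by omega
    rw [e] at h
    have h2 := congrArg (Nat.cast : ℕ → ℝ) h
    push_cast at h2
    linarith [h2]
  have hx2r : (((2 * n + s + 2).choose n : ℕ) : ℝ) * ((n:ℝ) + (s:ℝ) + 2)
      = (((2 * n + s + 1).choose n : ℕ) : ℝ) * (2 * (n:ℝ) + (s:ℝ) + 2) := by
    have h := Nat.choose_mul_succ_eq (2 * n + s + 1) n
    have e : 2 * n + s + 1 + 1 - n = n + s + 2 := by omega
    rw [e] at h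
    have h2 := congrArg (Nat.cast : ℕ → ℝ) h
    push_cast at h2
    linarith [h2]
  have hx3r : (((2 * n + s + 2).choose (n + 1) : ℕ) : ℝ) * ((n:ℝ) + 1)
      = (((2 * n + s + 2).choose n : ℕ) : ℝ) * ((n:ℝ) + (s:ℝ) + 2) := by
    have h := Nat.choose_succ_right_eq (2 * n + s + 2) n
    have e : 2 * n + s + 2 - n = n + s + 2 := by omega
    rw [e] at h
    have h2 := congrArg (Nat.cast : ℕ → ℝ) h
    push_cast at h2
    linarith [h2]
  have hc3r : (catalan (n + 1) : ℝ) * ((n:ℝ) + 2) = 2 * (2 * (n:ℝ) + 1) * (catalan n : ℝ) := by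
    have h2 := congrArg (Nat.cast : ℕ → ℝ) (L5 n)
    push_cast at h2
    linarith [h2]
  rw [G, G, h_a0, h_a1, h_a2, h_a3]
  push_cast
  -- abstract atoms
  set S := (s:ℝ) with hSdef
  set N := (n:ℝ) with hNdef
  set x : ℝ := (((2 * n + s).choose n : ℕ) : ℝ) with hxdef
  set x1 : ℝ := (((2 * n + s + 1).choose n : ℕ) : ℝ) with hx1def
  set x2 : ℝ := (((2 * n + s + 2).choose n : ℕ) : ℝ) with hx2def
  set x3 : ℝ := (((2 * n + s + 2).choose (n + 1) : ℕ) : ℝ) with hx3def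
  set c : ℝ := (catalan n : ℝ) with hcdef
  set c3 : ℝ := (catalan (n + 1) : ℝ) with hc3def
  set p : ℝ := (16:ℝ) ^ n with hpdef
  have hp : (0:ℝ) < p := by rw [hpdef]; positivity
  have hSpos : (0:ℝ) < S := by linarith
  have hNS1 : N + S + 1 ≠ 0 := by positivity
  have hNS2 : N + S + 2 ≠ 0 := by positivity
  have hN1 : N + 1 ≠ 0 := by positivity
  have hN2 : N + 2 ≠ 0 := by positivity
  have hx1e : x1 = x * (2 * N + S + 1) / (N + S + 1) := by
    rw [eq_div_iff hNS1]; linarith [hx1r]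
  have hx2e : x2 = x1 * (2 * N + S + 2) / (N + S + 2) := by
    rw [eq_div_iff hNS2]; linarith [hx2r]
  have hx3e : x3 = x2 * (N + S + 2) / (N + 1) := by
    rw [eq_div_iff hN1]; linarith [hx3r]
  have hc3e : c3 = 2 * (2 * N + 1) * c / (N + 2) := by
    rw [eq_div_iff hN2]; linarith [hc3r]
  rw [hx3e, hx2e, hx1e, hc3e]
  have h1 : (2 * N + S) ≠ 0 := by positivity
  have h2 : (2 * N + S + 1) ≠ 0 := by positivity
  have h3 : (2 * N + S + 2) ≠ 0 := by positivity
  have h4 : S ≠ 0 := ne_of_gt hSpos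
  have h5 : S + N + 1 ≠ 0 := by positivity
  have h6 : S + N + 2 ≠ 0 := by positivity
  have h7 : p ≠ 0 := ne_of_gt hp
  field_simp
  ring

/-- For `s ≥ 1`, `(2s+3)A_{s+2} − 2(3s−2)A_{s+1} + 4(s−2)A_s = 0`. -/
theorem stmt_18 (s : ℕ) (hs : 1 ≤ s) :
    (2 * (s : ℝ) + 3) * starSum (s + 2) - 2 * (3 * (s : ℝ) - 2) * starSum (s + 1) +
        4 * ((s : ℝ) - 2) * starSum s = 0 := by
  have hS : (1:ℝ) ≤ (s:ℝ) := by exact_mod_cast hs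
  have hSpos : (0:ℝ) < (s:ℝ) := by linarith
  set F : ℕ → ℝ := fun n =>
    (2 * (s:ℝ) + 3) * aa (s + 2) n - 2 * (3 * (s:ℝ) - 2) * aa (s + 1) n
      + 4 * ((s:ℝ) - 2) * aa s n with hF
  have hsum2 := summable_aa (s + 2) (by omega)
  have hsum1 := summable_aa (s + 1) (by omega)
  have hsum0 := summable_aa s hs
  have hFsummable : Summable F :=
    ((hsum2.mul_left _).sub (hsum1.mul_left _)).add (hsum0.mul_left _)
  -- partial sums telescope
  have hpartial : ∀ N : ℕ, ∑ n ∈ Finset.range N, F n = G s N := by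
    intro N
    induction N with
    | zero => simp [G]
    | succ N ih =>
      rw [Finset.sum_range_succ, ih]
      simp only [hF]
      rw [cert s N hs]
      ring
  -- G tends to 0
  have hGbound : ∀ n : ℕ, ‖G s n‖ ≤ 8 * ((s:ℝ) + 2) * 2 ^ s * (((n:ℝ) + 1))⁻¹ := by
    intro n
    have hN : (0:ℝ) ≤ (n:ℝ) := Nat.cast_nonneg n
    have hq : (0:ℝ) ≤ 8 * ((s:ℝ) + 2) * (n:ℝ) * ((n:ℝ) + 1) / ((s:ℝ) * ((s:ℝ) + (n:ℝ) + 1)) := by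
      positivity
    have hGeq : ‖G s n‖ = 8 * ((s:ℝ) + 2) * (n:ℝ) * ((n:ℝ) + 1) / ((s:ℝ) * ((s:ℝ) + (n:ℝ) + 1))
        * aa s n := by
      rw [G, Real.norm_eq_abs]
      rw [abs_mul]
      rw [abs_of_nonneg (aa_nonneg s n)]
      congr 1
      rw [abs_div]
      rw [abs_of_nonneg (by positivity : (0:ℝ) ≤ (s:ℝ) * ((s:ℝ) + (n:ℝ) + 1))]
      rw [show (-8 * ((s:ℝ) + 2) * (n:ℝ) * ((n:ℝ) + 1)) = -(8 * ((s:ℝ) + 2) * (n:ℝ) * ((n:ℝ) + 1)) by ring]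
      rw [abs_neg, abs_of_nonneg (by positivity)]
    rw [hGeq]
    calc 8 * ((s:ℝ) + 2) * (n:ℝ) * ((n:ℝ) + 1) / ((s:ℝ) * ((s:ℝ) + (n:ℝ) + 1)) * aa s n
        ≤ 8 * ((s:ℝ) + 2) * (n:ℝ) * ((n:ℝ) + 1) / ((s:ℝ) * ((s:ℝ) + (n:ℝ) + 1))
          * ((s : ℝ) * 2 ^ s * (((n : ℝ) + 1) ^ 2)⁻¹) :=
          mul_le_mul_of_nonneg_left (aa_le s n hs) hq
      _ ≤ 8 * ((s:ℝ) + 2) * 2 ^ s * (((n:ℝ) + 1))⁻¹ := by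
          rw [div_mul_eq_mul_div, div_le_iff₀ (by positivity)]
          have k1 : (n:ℝ) * ((n:ℝ) + 1) * (((n:ℝ) + 1) ^ 2)⁻¹ ≤ 1 := by
            rw [mul_inv_le_iff₀ (by positivity)]
            nlinarith
          have k2 : (1:ℝ) ≤ ((n:ℝ) + 1)⁻¹ * ((s:ℝ) + (n:ℝ) + 1) := by
            rw [inv_mul_eq_div, le_div_iff₀ (by positivity)]
            linarith
          calc 8 * ((s:ℝ) + 2) * (n:ℝ) * ((n:ℝ) + 1) * ((s:ℝ) * 2 ^ s * (((n:ℝ) + 1) ^ 2)⁻¹)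
              = (8 * ((s:ℝ) + 2) * (s:ℝ) * 2 ^ s) * ((n:ℝ) * ((n:ℝ) + 1) * (((n:ℝ) + 1) ^ 2)⁻¹) := by
                ring
            _ ≤ (8 * ((s:ℝ) + 2) * (s:ℝ) * 2 ^ s) * 1 :=
                mul_le_mul_of_nonneg_left k1 (by positivity)
            _ ≤ (8 * ((s:ℝ) + 2) * (s:ℝ) * 2 ^ s) * (((n:ℝ) + 1)⁻¹ * ((s:ℝ) + (n:ℝ) + 1)) :=
                mul_le_mul_of_nonneg_left k2 (by positivity)
            _ = 8 * ((s:ℝ) + 2) * 2 ^ s * ((n:ℝ) + 1)⁻¹ * ((s:ℝ) * ((s:ℝ) + (n:ℝ) + 1)) := by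
                ring
  have hGtendsto : Tendsto (fun n : ℕ => G s n) atTop (nhds 0) := by
    apply squeeze_zero_norm hGbound
    have h1 : Tendsto (fun n : ℕ => ((n:ℝ) + 1)⁻¹) atTop (nhds 0) := by
      have := tendsto_one_div_add_atTop_nhds_zero_nat (𝕜 := ℝ)
      simpa [one_div] using this
    have := h1.const_mul (8 * ((s:ℝ) + 2) * 2 ^ s)
    simpa using this
  -- conclude tsum F = 0
  have hFtsum : Tendsto (fun N => ∑ n ∈ Finset.range N, F n) atTop (nhds (∑' n, F n)) :=
    hFsummable.hasSum.tendsto_sum_nat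
  have h0 : (∑' n, F n) = 0 := by
    apply tendsto_nhds_unique _ hGtendsto
    have : (fun N => ∑ n ∈ Finset.range N, F n) = fun N => G s N := funext hpartial
    rwa [this] at hFtsum
  -- expand
  rw [starSum_eq_s18 (s + 2) (by omega), starSum_eq_s18 (s + 1) (by omega), starSum_eq_s18 s hs]
  have e2 : (2 * (s:ℝ) + 3) * (∑' n, aa (s + 2) n) = ∑' n, (2 * (s:ℝ) + 3) * aa (s + 2) n :=
    (tsum_mul_left).symm
  have e1 : (2 * (3 * (s:ℝ) - 2)) * (∑' n, aa (s + 1) n)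
      = ∑' n, (2 * (3 * (s:ℝ) - 2)) * aa (s + 1) n := (tsum_mul_left).symm
  have e0 : (4 * ((s:ℝ) - 2)) * (∑' n, aa s n) = ∑' n, (4 * ((s:ℝ) - 2)) * aa s n :=
    (tsum_mul_left).symm
  calc (2 * (s:ℝ) + 3) * (∑' n, aa (s + 2) n) - 2 * (3 * (s:ℝ) - 2) * (∑' n, aa (s + 1) n)
        + 4 * ((s:ℝ) - 2) * (∑' n, aa s n)
      = (∑' n, (2 * (s:ℝ) + 3) * aa (s + 2) n) - (∑' n, (2 * (3 * (s:ℝ) - 2)) * aa (s + 1) n)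
        + (∑' n, (4 * ((s:ℝ) - 2)) * aa s n) := by rw [← e2, ← e1, ← e0]
    _ = ∑' n, F n := by
        rw [← Summable.tsum_sub (hsum2.mul_left _) (hsum1.mul_left _),
          ← Summable.tsum_add ((hsum2.mul_left _).sub (hsum1.mul_left _)) (hsum0.mul_left _)]
    _ = 0 := h0
end
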